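/- arXiv:1205.3694 — 3 statements merged into one kernel-verified Lean document; each statement's English description precedes it below -/
import Mathlib

section
/- Let (X,R,μ) be a probability space over K, let T be an invertible measure preserving transformation of (X,R,μ), and let α be a finite partition of X relative to R. Then the limit h_μ(T,α) = lim_{n→∞} (1/n)·H_μ(α ∨ T⁻¹α ∨ ⋯ ∨ T^{-(n-1)}α) exists, and it equals inf_{n≥1} (1/n)·H_μ(α ∨ T⁻¹α ∨ ⋯ ∨ T^{-(n-1)}α). -/
open scoped Classical

/-- A covering ring of subsets of `X`: it covers `X` and is closed under
intersections, unions and differences. -/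
def IsCoveringRing {X : Type*} (R : Set (Set X)) : Prop :=
  (∀ x : X, ∃ A ∈ R, x ∈ A) ∧
    ∀ A ∈ R, ∀ B ∈ R, A ∩ B ∈ R ∧ A ∪ B ∈ R ∧ A \ B ∈ R

/-- `R` is separating: distinct points can be separated by a member of `R`. -/
def Separating {X : Type*} (R : Set (Set X)) : Prop :=
  ∀ x y : X, x ≠ y → ∃ A ∈ R, x ∈ A ∧ y ∉ A

/-- A shrinking collection: the intersection of any two members contains a member. -/
def Shrinking {X : Type*} (𝒜 : Set (Set X)) : Prop :=
  ∀ A ∈ 𝒜, ∀ B ∈ 𝒜, ∃ C ∈ 𝒜, C ⊆ A ∩ B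

/-- A `K`-valued measure on a covering ring `R`: additive, bounded and continuous. -/
structure IsKMeasure {X : Type*} {K : Type*} [NormedField K]
    (R : Set (Set X)) (μ : Set X → K) : Prop where
  additive : ∀ A ∈ R, ∀ B ∈ R, Disjoint A B → μ (A ∪ B) = μ A + μ B
  bounded : ∀ A ∈ R, ∃ M : ℝ, ∀ B ∈ R, B ⊆ A → ‖μ B‖ ≤ M
  cont : ∀ 𝒜 ⊆ R, Shrinking 𝒜 → ⋂₀ 𝒜 = ∅ →
    ∀ ε : ℝ, 0 < ε → ∃ A₀ ∈ 𝒜, ∀ A ∈ 𝒜, A ⊆ A₀ → ‖μ A‖ < ε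

/-- `‖A‖_μ = sup {|μ B| : B ∈ R, B ⊆ A}`. -/
noncomputable def setNorm {X K : Type*} [NormedField K]
    (R : Set (Set X)) (μ : Set X → K) (A : Set X) : ℝ :=
  sSup {r : ℝ | ∃ B ∈ R, B ⊆ A ∧ r = ‖μ B‖}

/-- `N_μ(x) = inf {‖A‖_μ : A ∈ R, x ∈ A}`. -/
noncomputable def normFun {X K : Type*} [NormedField K]
    (R : Set (Set X)) (μ : Set X → K) (x : X) : ℝ :=
  sInf {r : ℝ | ∃ A ∈ R, x ∈ A ∧ r = setNorm R μ A}

/-- `‖f‖_μ = sup_{x ∈ X} |f x| ⬝ N_μ(x)`. -/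
noncomputable def fNorm {X K : Type*} [NormedField K]
    (R : Set (Set X)) (μ : Set X → K) (f : X → K) : ℝ :=
  sSup {r : ℝ | ∃ x : X, r = ‖f x‖ * normFun R μ x}

/-- A probability space: `R` is a covering algebra and `μ(X) = 1`. -/
def IsProbSpace {X K : Type*} [NormedField K] (R : Set (Set X)) (μ : Set X → K) : Prop :=
  IsCoveringRing R ∧ Set.univ ∈ R ∧ IsKMeasure R μ ∧ μ Set.univ = 1

/-- A measure algebra isomorphism `(R,μ) → (R',ν)`. -/
def IsMeasAlgIso {X Y K : Type*} [NormedField K] (R : Set (Set X)) (μ : Set X → K)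
    (R' : Set (Set Y)) (ν : Set Y → K) (Φ : Set X → Set Y) : Prop :=
  Set.BijOn Φ R R' ∧
    (∀ A ∈ R, ∀ B ∈ R, Φ (A ∪ B) = Φ A ∪ Φ B) ∧
    (∀ A ∈ R, Φ (Set.univ \ A) = Set.univ \ Φ A) ∧
    (∀ A ∈ R, ν (Φ A) = μ A)

/-- An invertible measure preserving transformation of `(X,R,μ)`. -/
def IsInvMPT {X K : Type*} [NormedField K] (R : Set (Set X)) (μ : Set X → K)
    (T : X → X) : Prop :=
  Function.Bijective T ∧
    (∀ A ∈ R, T '' A ∈ R) ∧ (∀ A ∈ R, T ⁻¹' A ∈ R) ∧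
    (∀ A ∈ R, μ (T '' A) = μ A) ∧ (∀ A ∈ R, μ (T ⁻¹' A) = μ A)

/-- A finite partition of `X` by pairwise disjoint nonempty members of `R`. -/
def IsFinPartition {X : Type*} (R : Set (Set X)) (α : Finset (Set X)) : Prop :=
  (∀ A ∈ α, A ∈ R) ∧ (∀ A ∈ α, A ≠ ∅) ∧
    (∀ A ∈ α, ∀ B ∈ α, A ≠ B → Disjoint A B) ∧
    ⋃₀ (α : Set (Set X)) = Set.univ

/-- The join `α ∨ β` of two partitions, discarding empty intersections. -/
noncomputable def pJoin {X : Type*} (α β : Finset (Set X)) : Finset (Set X) :=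
  (Finset.image₂ (fun A B => A ∩ B) α β).filter (fun C => C ≠ ∅)

/-- `M(α)`: the number of members of `α` of positive norm. -/
noncomputable def Mcard {X K : Type*} [NormedField K] (R : Set (Set X)) (μ : Set X → K)
    (α : Finset (Set X)) : ℕ :=
  (α.filter (fun A => 0 < setNorm R μ A)).card

/-- `H_μ(α) = (min {‖A‖_μ : A ∈ α, ‖A‖_μ > 0}) * log₂ M(α)` (and `0` if `M(α) = 0`,
since `sInf ∅ = 0` and `log₂ 0 = 0` in Mathlib). -/
noncomputable def Hent {X K : Type*} [NormedField K] (R : Set (Set X)) (μ : Set X → K)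
    (α : Finset (Set X)) : ℝ :=
  sInf {r : ℝ | ∃ A ∈ α, 0 < setNorm R μ A ∧ r = setNorm R μ A} *
    Real.logb 2 (Mcard R μ α)

/-- `joinSeq T α n = α ∨ T⁻¹α ∨ ⋯ ∨ T^{-n}α`. -/
noncomputable def joinSeq {X : Type*} (T : X → X) (α : Finset (Set X)) : ℕ → Finset (Set X)
  | 0 => α
  | n + 1 => pJoin (joinSeq T α n) (α.image (fun A => T^[n + 1] ⁻¹' A))

/-- `h_μ(T,α) = lim_{n→∞} H_μ(α ∨ T⁻¹α ∨ ⋯ ∨ T^{-(n-1)}α)/n`. -/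
noncomputable def hMeasPart {X K : Type*} [NormedField K] (R : Set (Set X)) (μ : Set X → K)
    (T : X → X) (α : Finset (Set X)) : ℝ :=
  Filter.limUnder Filter.atTop (fun n : ℕ => Hent R μ (joinSeq T α n) / (n + 1))

/-- `h_μ(T) = sup_α h_μ(T,α)` over finite partitions `α` of `X` relative to `R`. -/
noncomputable def hMeas {X K : Type*} [NormedField K] (R : Set (Set X)) (μ : Set X → K)
    (T : X → X) : ℝ :=
  sSup {r : ℝ | ∃ α : Finset (Set X), IsFinPartition R α ∧ r = hMeasPart R μ T α}

/-- The partition `α(𝒰)` associated to a finite cover `𝒰`: nonempty sets of the form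
`A₁ ∩ ⋯ ∩ A_k` where each `Aᵢ` is `Uᵢ` or `X ∖ Uᵢ`. -/
noncomputable def coverPart {X : Type*} (𝒰 : Finset (Set X)) : Finset (Set X) :=
  ((𝒰.powerset).image fun S => (⋂ U ∈ S, U) ∩ ⋂ U ∈ 𝒰 \ S, (Set.univ \ U)).filter
    (fun C => C ≠ ∅)

/-- The join `𝒰 ∨ 𝒲` of two covers. -/
noncomputable def cJoin {X : Type*} (𝒰 𝒲 : Finset (Set X)) : Finset (Set X) :=
  Finset.image₂ (fun U W => U ∩ W) 𝒰 𝒲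

/-- `N(𝒰)`: the least cardinality of a subcover of `𝒰`. -/
noncomputable def coverN {X : Type*} (𝒰 : Finset (Set X)) : ℕ :=
  sInf {n : ℕ | ∃ 𝒱 : Finset (Set X), 𝒱 ⊆ 𝒰 ∧ ⋃₀ (𝒱 : Set (Set X)) = Set.univ ∧ 𝒱.card = n}

/-- `H_top(𝒰) = log₂ N(𝒰)`. -/
noncomputable def Htop {X : Type*} (𝒰 : Finset (Set X)) : ℝ :=
  Real.logb 2 (coverN 𝒰)

/-- `cJoinSeq T 𝒰 n = 𝒰 ∨ T⁻¹𝒰 ∨ ⋯ ∨ T^{-n}𝒰`. -/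
noncomputable def cJoinSeq {X : Type*} (T : X → X) (𝒰 : Finset (Set X)) : ℕ → Finset (Set X)
  | 0 => 𝒰
  | n + 1 => cJoin (cJoinSeq T 𝒰 n) (𝒰.image (fun U => T^[n + 1] ⁻¹' U))

/-- `h_top(T,𝒰) = lim_{n→∞} H_top(𝒰 ∨ T⁻¹𝒰 ∨ ⋯ ∨ T^{-(n-1)}𝒰)/n`. -/
noncomputable def hTopCov {X : Type*} (T : X → X) (𝒰 : Finset (Set X)) : ℝ :=
  Filter.limUnder Filter.atTop (fun n : ℕ => Htop (cJoinSeq T 𝒰 n) / (n + 1))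

/-- `h_top(T) = sup_𝒰 h_top(T,𝒰)` over finite open covers `𝒰` of `X` for the
topology `t`. -/
noncomputable def hTop {X : Type*} (t : TopologicalSpace X) (T : X → X) : ℝ :=
  sSup {r : ℝ | ∃ 𝒰 : Finset (Set X), (∀ U ∈ 𝒰, t.IsOpen U) ∧
    ⋃₀ (𝒰 : Set (Set X)) = Set.univ ∧ r = hTopCov T 𝒰}

section Aux

variable {X K : Type*} [NontriviallyNormedField K]
variable {R : Set (Set X)} {μ : Set X → K}

lemma ad_inter_mem (hXp : IsProbSpace R μ) {A B : Set X} (hA : A ∈ R) (hB : B ∈ R) :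
    A ∩ B ∈ R := (hXp.1.2 A hA B hB).1

lemma ad_union_mem (hXp : IsProbSpace R μ) {A B : Set X} (hA : A ∈ R) (hB : B ∈ R) :
    A ∪ B ∈ R := (hXp.1.2 A hA B hB).2.1

lemma ad_diff_mem (hXp : IsProbSpace R μ) {A B : Set X} (hA : A ∈ R) (hB : B ∈ R) :
    A \ B ∈ R := (hXp.1.2 A hA B hB).2.2

lemma ad_empty_mem (hXp : IsProbSpace R μ) : (∅ : Set X) ∈ R := by
  have h := ad_diff_mem hXp hXp.2.1 hXp.2.1
  simpa using h

lemma ad_mu_empty (hXp : IsProbSpace R μ) : μ ∅ = 0 := by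
  have h := hXp.2.2.1.additive ∅ (ad_empty_mem hXp) ∅ (ad_empty_mem hXp) (by simp)
  simp only [Set.union_empty] at h
  have h2 : μ ∅ + μ ∅ - μ ∅ = μ ∅ - μ ∅ := by rw [← h]
  simpa using h2

lemma ad_setNorm_bddAbove (hXp : IsProbSpace R μ) {A : Set X} (hA : A ∈ R) :
    BddAbove {r : ℝ | ∃ B ∈ R, B ⊆ A ∧ r = ‖μ B‖} := by
  obtain ⟨M, hM⟩ := hXp.2.2.1.bounded A hA
  exact ⟨M, fun r ⟨B, hB, hBA, hr⟩ => hr ▸ hM B hB hBA⟩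

lemma ad_setNorm_nonempty (A : Set X) (hXp : IsProbSpace R μ) :
    {r : ℝ | ∃ B ∈ R, B ⊆ A ∧ r = ‖μ B‖}.Nonempty :=
  ⟨‖μ ∅‖, ∅, ad_empty_mem hXp, Set.empty_subset A, rfl⟩

lemma ad_norm_le_setNorm (hXp : IsProbSpace R μ) {A : Set X} (hA : A ∈ R)
    {B : Set X} (hB : B ∈ R) (hBA : B ⊆ A) : ‖μ B‖ ≤ setNorm R μ A :=
  le_csSup (ad_setNorm_bddAbove hXp hA) ⟨B, hB, hBA, rfl⟩

lemma ad_setNorm_nonneg (hXp : IsProbSpace R μ) {A : Set X} (hA : A ∈ R) :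
    0 ≤ setNorm R μ A := by
  have := ad_norm_le_setNorm hXp hA (ad_empty_mem hXp) (Set.empty_subset A)
  exact le_trans (norm_nonneg _) this

lemma ad_setNorm_mono (hXp : IsProbSpace R μ) {A B : Set X} (hB : B ∈ R) (hAB : A ⊆ B) :
    setNorm R μ A ≤ setNorm R μ B := by
  apply csSup_le_csSup (ad_setNorm_bddAbove hXp hB) (ad_setNorm_nonempty A hXp)
  rintro r ⟨C, hC, hCA, hr⟩
  exact ⟨C, hC, hCA.trans hAB, hr⟩

lemma ad_setNorm_empty (hXp : IsProbSpace R μ) : setNorm R μ (∅ : Set X) = 0 := by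
  apply le_antisymm
  · apply csSup_le (ad_setNorm_nonempty ∅ hXp)
    rintro r ⟨B, hB, hBA, hr⟩
    have : B = ∅ := Set.subset_empty_iff.mp hBA
    simp [hr, this, ad_mu_empty hXp]
  · exact ad_setNorm_nonneg hXp (ad_empty_mem hXp)

lemma ad_setNorm_pos_ne (hXp : IsProbSpace R μ) {A : Set X} (hpos : 0 < setNorm R μ A) :
    A ≠ ∅ := by
  intro h; rw [h, ad_setNorm_empty hXp] at hpos; exact lt_irrefl _ hpos

/-- Sum of a measure over the pieces of a disjoint finite family covering `C`. -/
lemma ad_mu_partsum (hXp : IsProbSpace R μ) :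
    ∀ s : Finset (Set X), (∀ B ∈ s, B ∈ R) →
      (∀ A ∈ s, ∀ B ∈ s, A ≠ B → Disjoint A B) →
      ∀ C, C ∈ R → C ⊆ ⋃₀ (s : Set (Set X)) → μ C = ∑ B ∈ s, μ (C ∩ B) := by
  intro s
  induction s using Finset.induction_on with
  | empty =>
    intro _ _ C hC hCs
    simp only [Finset.coe_empty, Set.sUnion_empty, Set.subset_empty_iff] at hCs
    simp [hCs, ad_mu_empty hXp]
  | @insert B₀ s hB₀s IH =>
    intro hmem hdis C hC hCs
    have hB₀ : B₀ ∈ R := hmem B₀ (Finset.mem_insert_self _ _)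
    have h1 : C ∩ B₀ ∈ R := ad_inter_mem hXp hC hB₀
    have h2 : C \ B₀ ∈ R := ad_diff_mem hXp hC hB₀
    have hsplit : C = (C ∩ B₀) ∪ (C \ B₀) := by
      ext x; by_cases hx : x ∈ B₀ <;> simp [hx]
    have hadd : μ C = μ (C ∩ B₀) + μ (C \ B₀) := by
      conv_lhs => rw [hsplit]
      exact hXp.2.2.1.additive _ h1 _ h2 (Set.disjoint_left.mpr (by rintro x ⟨-, hx⟩ ⟨-, hx'⟩; exact hx' hx))
    have hsub : C \ B₀ ⊆ ⋃₀ (s : Set (Set X)) := by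
      rintro x ⟨hxC, hxB₀⟩
      obtain ⟨D, hD, hxD⟩ := hCs hxC
      rcases Finset.mem_insert.mp (by exact_mod_cast hD) with rfl | hDs
      · exact absurd hxD hxB₀
      · exact ⟨D, by exact_mod_cast hDs, hxD⟩
    have hrest : μ (C \ B₀) = ∑ B ∈ s, μ ((C \ B₀) ∩ B) :=
      IH (fun B hB => hmem B (Finset.mem_insert_of_mem hB))
        (fun A hA B hB => hdis A (Finset.mem_insert_of_mem hA) B (Finset.mem_insert_of_mem hB))
        _ h2 hsub
    have hpieces : ∀ B ∈ s, (C \ B₀) ∩ B = C ∩ B := by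
      intro B hB
      have hd : Disjoint B₀ B := hdis B₀ (Finset.mem_insert_self _ _) B
        (Finset.mem_insert_of_mem hB) (by rintro rfl; exact hB₀s hB)
      ext x
      constructor
      · rintro ⟨⟨hxC, -⟩, hxB⟩; exact ⟨hxC, hxB⟩
      · rintro ⟨hxC, hxB⟩
        exact ⟨⟨hxC, fun hxB₀ => Set.disjoint_left.mp hd hxB₀ hxB⟩, hxB⟩
    rw [Finset.sum_insert hB₀s, hadd, hrest]
    congr 1
    exact Finset.sum_congr rfl fun B hB => by rw [hpieces B hB]

/-- Nonarchimedean bound for finite sums. -/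
lemma ad_nonarch_sum (hna : IsNonarchimedean (norm : K → ℝ)) {ι : Type*} :
    ∀ s : Finset ι, ∀ v : ι → K, ∀ M : ℝ, 0 ≤ M → (∀ i ∈ s, ‖v i‖ ≤ M) →
      ‖∑ i ∈ s, v i‖ ≤ M := by
  intro s
  induction s using Finset.induction_on with
  | empty => intro v M hM _; simpa using hM
  | @insert i s his IH =>
    intro v M hM hv
    rw [Finset.sum_insert his]
    refine le_trans (hna _ _) (max_le (hv i (Finset.mem_insert_self _ _)) ?_)
    exact IH v M hM fun j hj => hv j (Finset.mem_insert_of_mem hj)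

end Aux

section Aux2

variable {X K : Type*} [NontriviallyNormedField K]
variable {R : Set (Set X)} {μ : Set X → K}

lemma ad_nonempty_X (hXp : IsProbSpace R μ) : Nonempty X := by
  by_contra h
  have huniv : (Set.univ : Set X) = ∅ := by
    ext x; exact absurd ⟨x⟩ h
  have := hXp.2.2.2
  rw [huniv, ad_mu_empty hXp] at this
  exact zero_ne_one this

lemma ad_part_nonempty (hXp : IsProbSpace R μ) {β : Finset (Set X)}
    (hβ : IsFinPartition R β) : β.Nonempty := by
  obtain ⟨x⟩ := ad_nonempty_X hXp
  have hx : x ∈ ⋃₀ (β : Set (Set X)) := hβ.2.2.2 ▸ Set.mem_univ x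
  obtain ⟨B, hB, -⟩ := hx
  exact ⟨B, by exact_mod_cast hB⟩

/-- Key nonarchimedean fact: the norm of `A` is attained on some piece of a partition. -/
lemma ad_exists_inter (hna : IsNonarchimedean (norm : K → ℝ)) (hXp : IsProbSpace R μ)
    {A : Set X} (hA : A ∈ R) {β : Finset (Set X)} (hβ : IsFinPartition R β) :
    ∃ B ∈ β, setNorm R μ A ≤ setNorm R μ (A ∩ B) := by
  have hβne := ad_part_nonempty hXp hβ
  set g : Set X → ℝ := fun B => setNorm R μ (A ∩ B) with hg
  have hne : (β.image g).Nonempty := hβne.image g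
  set M := (β.image g).max' hne with hM
  obtain ⟨B₀, hB₀, hgB₀⟩ := Finset.mem_image.mp ((β.image g).max'_mem hne)
  have hMnonneg : 0 ≤ M := le_trans
    (ad_setNorm_nonneg hXp (ad_inter_mem hXp hA (hβ.1 B₀ hB₀))) (le_of_eq hgB₀)
  have hub : setNorm R μ A ≤ M := by
    apply csSup_le (ad_setNorm_nonempty A hXp)
    rintro r ⟨C, hC, hCA, rfl⟩
    have hsum : μ C = ∑ B ∈ β, μ (C ∩ B) :=
      ad_mu_partsum hXp β hβ.1 hβ.2.2.1 C hC (by rw [hβ.2.2.2]; exact Set.subset_univ C)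
    rw [hsum]
    apply ad_nonarch_sum hna β _ M hMnonneg
    intro B hB
    have h1 : ‖μ (C ∩ B)‖ ≤ setNorm R μ (A ∩ B) :=
      ad_norm_le_setNorm hXp (ad_inter_mem hXp hA (hβ.1 B hB))
        (ad_inter_mem hXp hC (hβ.1 B hB))
        (Set.inter_subset_inter_left B hCA)
    exact h1.trans (Finset.le_max' _ _ (Finset.mem_image_of_mem g hB))
  exact ⟨B₀, hB₀, hub.trans (le_of_eq hgB₀.symm)⟩

lemma ad_pJoin_mem {a b : Finset (Set X)} {C : Set X} :
    C ∈ pJoin a b ↔ (∃ A ∈ a, ∃ B ∈ b, A ∩ B = C) ∧ C ≠ ∅ := by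
  simp [pJoin, Finset.mem_filter, Finset.mem_image₂]

lemma ad_pJoin_part (hXp : IsProbSpace R μ) {a b : Finset (Set X)}
    (ha : IsFinPartition R a) (hb : IsFinPartition R b) :
    IsFinPartition R (pJoin a b) := by
  refine ⟨?_, ?_, ?_, ?_⟩
  · rintro C hC
    obtain ⟨⟨A, hA, B, hB, rfl⟩, -⟩ := ad_pJoin_mem.mp hC
    exact ad_inter_mem hXp (ha.1 A hA) (hb.1 B hB)
  · rintro C hC
    exact (ad_pJoin_mem.mp hC).2
  · rintro C hC C' hC' hne
    obtain ⟨⟨A, hA, B, hB, rfl⟩, -⟩ := ad_pJoin_mem.mp hC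
    obtain ⟨⟨A', hA', B', hB', rfl⟩, -⟩ := ad_pJoin_mem.mp hC'
    by_cases hAA : A = A'
    · subst hAA
      have hBB : B ≠ B' := fun h => hne (by rw [h])
      exact ((hb.2.2.1 B hB B' hB' hBB).mono Set.inter_subset_right Set.inter_subset_right)
    · exact ((ha.2.2.1 A hA A' hA' hAA).mono Set.inter_subset_left Set.inter_subset_left)
  · ext x
    simp only [Set.mem_univ, iff_true]
    have hxa : x ∈ ⋃₀ (a : Set (Set X)) := ha.2.2.2 ▸ Set.mem_univ x
    have hxb : x ∈ ⋃₀ (b : Set (Set X)) := hb.2.2.2 ▸ Set.mem_univ x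
    obtain ⟨A, hA, hxA⟩ := hxa
    obtain ⟨B, hB, hxB⟩ := hxb
    refine ⟨A ∩ B, ?_, hxA, hxB⟩
    exact_mod_cast ad_pJoin_mem.mpr ⟨⟨A, by exact_mod_cast hA, B, by exact_mod_cast hB, rfl⟩,
      Set.nonempty_iff_ne_empty.mp ⟨x, hxA, hxB⟩⟩

lemma ad_Mcard_pJoin (hXp : IsProbSpace R μ) {a b : Finset (Set X)}
    (ha : IsFinPartition R a) (hb : IsFinPartition R b) :
    Mcard R μ (pJoin a b) ≤ Mcard R μ a * Mcard R μ b := by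
  classical
  unfold Mcard
  rw [← Finset.card_product]
  set P : Set X → Prop := fun A => 0 < setNorm R μ A with hP
  set f : Set X → Set X × Set X := fun C =>
    if h : ∃ p : Set X × Set X, p.1 ∈ a ∧ p.2 ∈ b ∧ p.1 ∩ p.2 = C then h.choose else (∅, ∅)
    with hf
  apply Finset.card_le_card_of_injOn f
  · intro C hC
    rw [Finset.mem_coe, Finset.mem_filter] at hC
    obtain ⟨hCj, hCpos⟩ := hC
    obtain ⟨⟨A, hA, B, hB, hABC⟩, -⟩ := ad_pJoin_mem.mp hCj
    have hex : ∃ p : Set X × Set X, p.1 ∈ a ∧ p.2 ∈ b ∧ p.1 ∩ p.2 = C := ⟨(A, B), hA, hB, hABC⟩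
    have hspec := hex.choose_spec
    rw [Finset.mem_coe, Finset.mem_product, Finset.mem_filter, Finset.mem_filter]
    simp only [hf, dif_pos hex]
    refine ⟨⟨hspec.1, ?_⟩, hspec.2.1, ?_⟩
    · refine lt_of_lt_of_le hCpos (ad_setNorm_mono hXp (ha.1 _ hspec.1) ?_)
      intro x hx
      have hx2 : x ∈ hex.choose.1 ∩ hex.choose.2 := hspec.2.2.symm ▸ hx
      exact hx2.1
    · refine lt_of_lt_of_le hCpos (ad_setNorm_mono hXp (hb.1 _ hspec.2.1) ?_)
      intro x hx
      have hx2 : x ∈ hex.choose.1 ∩ hex.choose.2 := hspec.2.2.symm ▸ hx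
      exact hx2.2
  · intro C hC C' hC' hfeq
    rw [Finset.coe_filter, Set.mem_setOf_eq] at hC hC'
    obtain ⟨⟨A, hA, B, hB, hABC⟩, -⟩ := ad_pJoin_mem.mp hC.1
    obtain ⟨⟨A', hA', B', hB', hABC'⟩, -⟩ := ad_pJoin_mem.mp hC'.1
    have hex : ∃ p : Set X × Set X, p.1 ∈ a ∧ p.2 ∈ b ∧ p.1 ∩ p.2 = C := ⟨(A, B), hA, hB, hABC⟩
    have hex' : ∃ p : Set X × Set X, p.1 ∈ a ∧ p.2 ∈ b ∧ p.1 ∩ p.2 = C' :=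
      ⟨(A', B'), hA', hB', hABC'⟩
    have h1 : f C = hex.choose := by simp only [hf, dif_pos hex]
    have h2 : f C' = hex'.choose := by simp only [hf, dif_pos hex']
    have e1 := hex.choose_spec.2.2
    have e2 := hex'.choose_spec.2.2
    rw [← e1, ← e2, ← h1, ← h2, hfeq]

end Aux2

section Aux3

variable {X K : Type*} [NontriviallyNormedField K]
variable {R : Set (Set X)} {μ : Set X → K}

lemma ad_exists_pos (hna : IsNonarchimedean (norm : K → ℝ)) (hXp : IsProbSpace R μ)
    {β : Finset (Set X)} (hβ : IsFinPartition R β) :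
    ∃ B ∈ β, 0 < setNorm R μ B := by
  obtain ⟨B, hB, hle⟩ := ad_exists_inter hna hXp hXp.2.1 hβ
  refine ⟨B, hB, ?_⟩
  have h1 : (1 : ℝ) ≤ setNorm R μ Set.univ := by
    have := ad_norm_le_setNorm hXp hXp.2.1 hXp.2.1 (subset_refl _)
    rwa [hXp.2.2.2, norm_one] at this
  have : Set.univ ∩ B = B := Set.univ_inter B
  rw [this] at hle
  linarith

lemma ad_Mcard_pos (hna : IsNonarchimedean (norm : K → ℝ)) (hXp : IsProbSpace R μ)
    {β : Finset (Set X)} (hβ : IsFinPartition R β) : 1 ≤ Mcard R μ β := by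
  obtain ⟨B, hB, hpos⟩ := ad_exists_pos hna hXp hβ
  have : B ∈ β.filter (fun A => 0 < setNorm R μ A) := Finset.mem_filter.mpr ⟨hB, hpos⟩
  exact Finset.card_pos.mpr ⟨B, this⟩

/-- The "min positive norm" set of a partition. -/
lemma ad_mSet_mem (hna : IsNonarchimedean (norm : K → ℝ)) (hXp : IsProbSpace R μ)
    {β : Finset (Set X)} (hβ : IsFinPartition R β) :
    sInf {r : ℝ | ∃ A ∈ β, 0 < setNorm R μ A ∧ r = setNorm R μ A} ∈
      {r : ℝ | ∃ A ∈ β, 0 < setNorm R μ A ∧ r = setNorm R μ A} := by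
  apply Set.Nonempty.csInf_mem
  · obtain ⟨B, hB, hpos⟩ := ad_exists_pos hna hXp hβ
    exact ⟨setNorm R μ B, B, hB, hpos, rfl⟩
  · apply Set.Finite.subset (Set.Finite.image (fun A => setNorm R μ A) β.finite_toSet)
    rintro r ⟨A, hA, -, rfl⟩
    exact ⟨A, hA, rfl⟩

lemma ad_mSet_le (hXp : IsProbSpace R μ) {β : Finset (Set X)} {A : Set X}
    (hA : A ∈ β) (hpos : 0 < setNorm R μ A) (hβR : ∀ B ∈ β, B ∈ R) :
    sInf {r : ℝ | ∃ A ∈ β, 0 < setNorm R μ A ∧ r = setNorm R μ A} ≤ setNorm R μ A := by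
  apply csInf_le
  · refine ⟨0, ?_⟩
    rintro r ⟨B, hB, hBpos, rfl⟩
    exact ad_setNorm_nonneg hXp (hβR B hB)
  · exact ⟨A, hA, hpos, rfl⟩

lemma ad_mSet_nonneg (hXp : IsProbSpace R μ) {β : Finset (Set X)} (hβR : ∀ B ∈ β, B ∈ R) :
    0 ≤ sInf {r : ℝ | ∃ A ∈ β, 0 < setNorm R μ A ∧ r = setNorm R μ A} := by
  apply Real.sInf_nonneg
  rintro r ⟨B, hB, hBpos, rfl⟩
  exact ad_setNorm_nonneg hXp (hβR B hB)

lemma ad_Hent_nonneg (hna : IsNonarchimedean (norm : K → ℝ)) (hXp : IsProbSpace R μ)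
    {β : Finset (Set X)} (hβ : IsFinPartition R β) : 0 ≤ Hent R μ β := by
  unfold Hent
  apply mul_nonneg (ad_mSet_nonneg hXp hβ.1)
  apply Real.logb_nonneg one_lt_two
  exact_mod_cast ad_Mcard_pos hna hXp hβ

/-- The min positive norm of a join is at most each factor's min positive norm. -/
lemma ad_mJoin_le_left (hna : IsNonarchimedean (norm : K → ℝ)) (hXp : IsProbSpace R μ)
    {a b : Finset (Set X)} (ha : IsFinPartition R a) (hb : IsFinPartition R b) :
    sInf {r : ℝ | ∃ C ∈ pJoin a b, 0 < setNorm R μ C ∧ r = setNorm R μ C} ≤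
      sInf {r : ℝ | ∃ A ∈ a, 0 < setNorm R μ A ∧ r = setNorm R μ A} := by
  obtain ⟨A₀, hA₀, hA₀pos, hA₀eq⟩ := ad_mSet_mem hna hXp ha
  obtain ⟨B₀, hB₀, hle⟩ := ad_exists_inter hna hXp (ha.1 A₀ hA₀) hb
  have hgeq : setNorm R μ (A₀ ∩ B₀) = setNorm R μ A₀ :=
    le_antisymm (ad_setNorm_mono hXp (ha.1 A₀ hA₀) Set.inter_subset_left) hle
  have hCpos : 0 < setNorm R μ (A₀ ∩ B₀) := hgeq ▸ (hA₀eq ▸ hA₀pos)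
  have hCmem : A₀ ∩ B₀ ∈ pJoin a b :=
    ad_pJoin_mem.mpr ⟨⟨A₀, hA₀, B₀, hB₀, rfl⟩, ad_setNorm_pos_ne hXp hCpos⟩
  calc sInf _ ≤ setNorm R μ (A₀ ∩ B₀) :=
        ad_mSet_le hXp hCmem hCpos (ad_pJoin_part hXp ha hb).1
    _ = _ := by rw [hgeq, ← hA₀eq]

lemma ad_mJoin_le_right (hna : IsNonarchimedean (norm : K → ℝ)) (hXp : IsProbSpace R μ)
    {a b : Finset (Set X)} (ha : IsFinPartition R a) (hb : IsFinPartition R b) :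
    sInf {r : ℝ | ∃ C ∈ pJoin a b, 0 < setNorm R μ C ∧ r = setNorm R μ C} ≤
      sInf {r : ℝ | ∃ B ∈ b, 0 < setNorm R μ B ∧ r = setNorm R μ B} := by
  obtain ⟨B₀, hB₀, hB₀pos, hB₀eq⟩ := ad_mSet_mem hna hXp hb
  obtain ⟨A₀, hA₀, hle⟩ := ad_exists_inter hna hXp (hb.1 B₀ hB₀) ha
  rw [Set.inter_comm] at hle
  have hgeq : setNorm R μ (A₀ ∩ B₀) = setNorm R μ B₀ :=
    le_antisymm (ad_setNorm_mono hXp (hb.1 B₀ hB₀) Set.inter_subset_right) hle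
  have hCpos : 0 < setNorm R μ (A₀ ∩ B₀) := hgeq ▸ (hB₀eq ▸ hB₀pos)
  have hCmem : A₀ ∩ B₀ ∈ pJoin a b :=
    ad_pJoin_mem.mpr ⟨⟨A₀, hA₀, B₀, hB₀, rfl⟩, ad_setNorm_pos_ne hXp hCpos⟩
  calc sInf _ ≤ setNorm R μ (A₀ ∩ B₀) :=
        ad_mSet_le hXp hCmem hCpos (ad_pJoin_part hXp ha hb).1
    _ = _ := by rw [hgeq, ← hB₀eq]

/-- Subadditivity of the entropy under joins. -/
lemma ad_Hent_subadd (hna : IsNonarchimedean (norm : K → ℝ)) (hXp : IsProbSpace R μ)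
    {a b : Finset (Set X)} (ha : IsFinPartition R a) (hb : IsFinPartition R b) :
    Hent R μ (pJoin a b) ≤ Hent R μ a + Hent R μ b := by
  unfold Hent
  set mj := sInf {r : ℝ | ∃ C ∈ pJoin a b, 0 < setNorm R μ C ∧ r = setNorm R μ C} with hmj
  set ma := sInf {r : ℝ | ∃ A ∈ a, 0 < setNorm R μ A ∧ r = setNorm R μ A} with hma
  set mb := sInf {r : ℝ | ∃ B ∈ b, 0 < setNorm R μ B ∧ r = setNorm R μ B} with hmb
  have h1 : mj ≤ ma := ad_mJoin_le_left hna hXp ha hb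
  have h2 : mj ≤ mb := ad_mJoin_le_right hna hXp ha hb
  have h0 : 0 ≤ mj := ad_mSet_nonneg hXp (ad_pJoin_part hXp ha hb).1
  have hMa : 1 ≤ (Mcard R μ a : ℝ) := by exact_mod_cast ad_Mcard_pos hna hXp ha
  have hMb : 1 ≤ (Mcard R μ b : ℝ) := by exact_mod_cast ad_Mcard_pos hna hXp hb
  have hMj : 1 ≤ (Mcard R μ (pJoin a b) : ℝ) := by
    exact_mod_cast ad_Mcard_pos hna hXp (ad_pJoin_part hXp ha hb)
  have hla : 0 ≤ Real.logb 2 (Mcard R μ a) := Real.logb_nonneg one_lt_two hMa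
  have hlb : 0 ≤ Real.logb 2 (Mcard R μ b) := Real.logb_nonneg one_lt_two hMb
  have hlog : Real.logb 2 (Mcard R μ (pJoin a b)) ≤
      Real.logb 2 (Mcard R μ a) + Real.logb 2 (Mcard R μ b) := by
    rw [← Real.logb_mul (by positivity) (by positivity)]
    apply Real.logb_le_logb_of_le one_lt_two (by linarith)
    have := ad_Mcard_pJoin hXp ha hb
    exact_mod_cast this
  calc mj * Real.logb 2 (Mcard R μ (pJoin a b))
      ≤ mj * (Real.logb 2 (Mcard R μ a) + Real.logb 2 (Mcard R μ b)) := by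
        apply mul_le_mul_of_nonneg_left hlog h0
    _ = mj * Real.logb 2 (Mcard R μ a) + mj * Real.logb 2 (Mcard R μ b) := by ring
    _ ≤ ma * Real.logb 2 (Mcard R μ a) + mb * Real.logb 2 (Mcard R μ b) :=
        add_le_add (mul_le_mul_of_nonneg_right h1 hla) (mul_le_mul_of_nonneg_right h2 hlb)
    _ = _ := rfl

end Aux3

section Aux4

variable {X K : Type*} [NontriviallyNormedField K]
variable {R : Set (Set X)} {μ : Set X → K}

lemma ad_invMPT_comp {S T : X → X} (hS : IsInvMPT R μ S) (hT : IsInvMPT R μ T) :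
    IsInvMPT R μ (S ∘ T) := by
  refine ⟨hS.1.comp hT.1, ?_, ?_, ?_, ?_⟩
  · intro A hA
    rw [Set.image_comp]
    exact hS.2.1 _ (hT.2.1 A hA)
  · intro A hA
    rw [Set.preimage_comp]
    exact hT.2.2.1 _ (hS.2.2.1 A hA)
  · intro A hA
    rw [Set.image_comp]
    rw [hS.2.2.2.1 _ (hT.2.1 A hA), hT.2.2.2.1 A hA]
  · intro A hA
    rw [Set.preimage_comp]
    rw [hT.2.2.2.2 _ (hS.2.2.1 A hA), hS.2.2.2.2 A hA]

lemma ad_invMPT_id : IsInvMPT R μ (id : X → X) := by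
  refine ⟨Function.bijective_id, ?_, ?_, ?_, ?_⟩ <;> intro A hA <;> simpa

lemma ad_invMPT_iterate {T : X → X} (hT : IsInvMPT R μ T) (k : ℕ) :
    IsInvMPT R μ (T^[k]) := by
  induction k with
  | zero => exact ad_invMPT_id
  | succ k IH =>
    rw [Function.iterate_succ]
    exact ad_invMPT_comp IH hT

lemma ad_setNorm_preim (hXp : IsProbSpace R μ) {S : X → X} (hS : IsInvMPT R μ S)
    (A : Set X) : setNorm R μ (S ⁻¹' A) = setNorm R μ A := by
  unfold setNorm
  congr 1
  ext r
  constructor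
  · rintro ⟨B, hB, hBA, rfl⟩
    refine ⟨S '' B, hS.2.1 B hB, ?_, by rw [hS.2.2.2.1 B hB]⟩
    exact Set.image_subset_iff.mpr hBA
  · rintro ⟨B, hB, hBA, rfl⟩
    exact ⟨S ⁻¹' B, hS.2.2.1 B hB, Set.preimage_mono hBA, by rw [hS.2.2.2.2 B hB]⟩

lemma ad_image_part (hXp : IsProbSpace R μ) {S : X → X} (hS : IsInvMPT R μ S)
    {β : Finset (Set X)} (hβ : IsFinPartition R β) :
    IsFinPartition R (β.image (fun A => S ⁻¹' A)) := by
  have hinj : Function.Injective (Set.preimage S) := Set.preimage_injective.mpr hS.1.2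
  refine ⟨?_, ?_, ?_, ?_⟩
  · intro A hA
    obtain ⟨B, hB, rfl⟩ := Finset.mem_image.mp hA
    exact hS.2.2.1 B (hβ.1 B hB)
  · intro A hA
    obtain ⟨B, hB, rfl⟩ := Finset.mem_image.mp hA
    intro h
    apply hβ.2.1 B hB
    have : S ⁻¹' B = S ⁻¹' ∅ := by simpa using h
    exact hinj this
  · intro A hA A' hA' hne
    obtain ⟨B, hB, rfl⟩ := Finset.mem_image.mp hA
    obtain ⟨B', hB', rfl⟩ := Finset.mem_image.mp hA'
    have hBB' : B ≠ B' := fun h => hne (by rw [h])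
    exact Disjoint.preimage S (hβ.2.2.1 B hB B' hB' hBB')
  · ext x
    simp only [Set.mem_univ, iff_true]
    have : S x ∈ ⋃₀ (β : Set (Set X)) := hβ.2.2.2 ▸ Set.mem_univ _
    obtain ⟨B, hB, hxB⟩ := this
    exact ⟨S ⁻¹' B, by simpa using ⟨B, by exact_mod_cast hB, rfl⟩, hxB⟩

lemma ad_Hent_image (hXp : IsProbSpace R μ) {S : X → X} (hS : IsInvMPT R μ S)
    (β : Finset (Set X)) :
    Hent R μ (β.image (fun A => S ⁻¹' A)) = Hent R μ β := by
  classical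
  have hinj : Function.Injective (Set.preimage S) := Set.preimage_injective.mpr hS.1.2
  have hnorm : ∀ A, setNorm R μ (S ⁻¹' A) = setNorm R μ A := ad_setNorm_preim hXp hS
  unfold Hent
  have hM : Mcard R μ (β.image (fun A => S ⁻¹' A)) = Mcard R μ β := by
    unfold Mcard
    rw [Finset.filter_image]
    rw [Finset.card_image_of_injective _ hinj]
    congr 1
    apply Finset.filter_congr
    intro A hA
    simp [hnorm A]
  have hset : {r : ℝ | ∃ A ∈ β.image (fun A => S ⁻¹' A), 0 < setNorm R μ A ∧ r = setNorm R μ A}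
      = {r : ℝ | ∃ A ∈ β, 0 < setNorm R μ A ∧ r = setNorm R μ A} := by
    ext r
    constructor
    · rintro ⟨A, hA, hpos, rfl⟩
      obtain ⟨B, hB, rfl⟩ := Finset.mem_image.mp hA
      exact ⟨B, hB, by rwa [hnorm B] at hpos, by rw [hnorm B]⟩
    · rintro ⟨B, hB, hpos, rfl⟩
      exact ⟨S ⁻¹' B, Finset.mem_image_of_mem _ hB, by rwa [hnorm B], by rw [hnorm B]⟩
  rw [hM, hset]

lemma ad_pJoin_assoc {a b c : Finset (Set X)} :
    pJoin (pJoin a b) c = pJoin a (pJoin b c) := by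
  ext C
  rw [ad_pJoin_mem, ad_pJoin_mem]
  constructor
  · rintro ⟨⟨E, hE, D, hD, rfl⟩, hne⟩
    obtain ⟨⟨A, hA, B, hB, rfl⟩, -⟩ := ad_pJoin_mem.mp hE
    have hBD : B ∩ D ≠ ∅ := by
      intro h
      apply hne
      rw [Set.inter_assoc, h, Set.inter_empty]
    refine ⟨⟨A, hA, B ∩ D, ad_pJoin_mem.mpr ⟨⟨B, hB, D, hD, rfl⟩, hBD⟩, ?_⟩, hne⟩
    rw [Set.inter_assoc]
  · rintro ⟨⟨A, hA, E, hE, rfl⟩, hne⟩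
    obtain ⟨⟨B, hB, D, hD, rfl⟩, -⟩ := ad_pJoin_mem.mp hE
    have hAB : A ∩ B ≠ ∅ := by
      intro h
      apply hne
      rw [← Set.inter_assoc, h, Set.empty_inter]
    refine ⟨⟨A ∩ B, ad_pJoin_mem.mpr ⟨⟨A, hA, B, hB, rfl⟩, hAB⟩, D, hD, ?_⟩, hne⟩
    rw [Set.inter_assoc]

lemma ad_pJoin_image {S : X → X} (hS : Function.Bijective S) (a b : Finset (Set X)) :
    (pJoin a b).image (fun A => S ⁻¹' A) =
      pJoin (a.image (fun A => S ⁻¹' A)) (b.image (fun A => S ⁻¹' A)) := by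
  classical
  have hinj : Function.Injective (Set.preimage S) := Set.preimage_injective.mpr hS.2
  have hemp : ∀ A : Set X, S ⁻¹' A = ∅ ↔ A = ∅ := by
    intro A
    constructor
    · intro h
      have : S ⁻¹' A = S ⁻¹' ∅ := by simpa using h
      exact hinj this
    · rintro rfl; simp
  ext C
  rw [ad_pJoin_mem]
  simp only [Finset.mem_image]
  constructor
  · rintro ⟨D, hD, rfl⟩
    obtain ⟨⟨A, hA, B, hB, rfl⟩, hne⟩ := ad_pJoin_mem.mp hD
    refine ⟨⟨S ⁻¹' A, ⟨A, hA, rfl⟩, S ⁻¹' B, ⟨B, hB, rfl⟩, by rw [Set.preimage_inter]⟩, ?_⟩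
    rw [Set.preimage_inter] at *
    intro h
    exact hne (hinj (by simpa [Set.preimage_inter] using h))
  · rintro ⟨⟨A', ⟨A, hA, rfl⟩, B', ⟨B, hB, rfl⟩, rfl⟩, hne⟩
    refine ⟨A ∩ B, ad_pJoin_mem.mpr ⟨⟨A, hA, B, hB, rfl⟩, ?_⟩, by rw [Set.preimage_inter]⟩
    intro h
    apply hne
    rw [← Set.preimage_inter, h]
    simp

end Aux4

section Aux5

variable {X K : Type*} [NontriviallyNormedField K]
variable {R : Set (Set X)} {μ : Set X → K}

lemma ad_joinSeq_part (hXp : IsProbSpace R μ) {T : X → X} (hT : IsInvMPT R μ T)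
    {α : Finset (Set X)} (hα : IsFinPartition R α) (n : ℕ) :
    IsFinPartition R (joinSeq T α n) := by
  induction n with
  | zero => exact hα
  | succ n IH =>
    exact ad_pJoin_part hXp IH (ad_image_part hXp (ad_invMPT_iterate hT (n + 1)) hα)

lemma ad_joinSeq_decomp {T : X → X} (hT : Function.Bijective T)
    (α : Finset (Set X)) (m : ℕ) :
    ∀ n : ℕ, joinSeq T α (m + 1 + n) =
      pJoin (joinSeq T α m) ((joinSeq T α n).image (fun A => T^[m + 1] ⁻¹' A)) := by
  intro n
  induction n with
  | zero => rfl
  | succ n IH =>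
    have hTk : Function.Bijective (T^[m + 1]) := Function.Bijective.iterate hT (m + 1)
    have hcomp : (fun A : Set X => T^[m + 1] ⁻¹' (T^[n + 1] ⁻¹' A)) =
        (fun A : Set X => T^[m + 1 + n + 1] ⁻¹' A) := by
      funext A
      rw [← Set.preimage_comp, ← Function.iterate_add]
      have h : n + 1 + (m + 1) = m + 1 + n + 1 := by omega
      rw [h]
    have h1 : m + 1 + (n + 1) = (m + 1 + n) + 1 := by omega
    rw [h1]
    show pJoin (joinSeq T α (m + 1 + n)) (α.image (fun A => T^[m + 1 + n + 1] ⁻¹' A)) = _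
    rw [IH]
    show _ = pJoin (joinSeq T α m)
      ((pJoin (joinSeq T α n) (α.image (fun A => T^[n + 1] ⁻¹' A))).image
        (fun A => T^[m + 1] ⁻¹' A))
    rw [ad_pJoin_image hTk, ad_pJoin_assoc, Finset.image_image]
    congr 1
    congr 1
    apply Finset.image_congr
    intro A _
    exact (congrFun hcomp A).symm

end Aux5

/-- The limit `h_μ(T,α) = lim_n H_μ(α ∨ T⁻¹α ∨ ⋯ ∨ T^{-(n-1)}α)/n`
exists and equals the infimum of the sequence. Here `joinSeq T α n` has `n + 1` joinands,
so the sequence `n ↦ H_μ(joinSeq T α n)/(n+1)` is exactly `n ↦ (1/n)·H_μ(α ∨ ⋯ ∨ T^{-(n-1)}α)`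
re-indexed over `n ≥ 1`. -/
theorem stmt15 {X K : Type*} [NontriviallyNormedField K] [CompleteSpace K]
    (hna : IsNonarchimedean (norm : K → ℝ))
    (R : Set (Set X)) (μ : Set X → K) (hXp : IsProbSpace R μ)
    (T : X → X) (hT : IsInvMPT R μ T)
    (α : Finset (Set X)) (hα : IsFinPartition R α) :
    Filter.Tendsto (fun n : ℕ => Hent R μ (joinSeq T α n) / (n + 1)) Filter.atTop
      (nhds (⨅ n : ℕ, Hent R μ (joinSeq T α n) / (n + 1))) := by
  set a : ℕ → ℝ := fun n => Hent R μ (joinSeq T α n) with ha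
  have hpart : ∀ n, IsFinPartition R (joinSeq T α n) := ad_joinSeq_part hXp hT hα
  have ha0 : ∀ n, 0 ≤ a n := fun n => ad_Hent_nonneg hna hXp (hpart n)
  have hkey : ∀ m n, a (m + 1 + n) ≤ a m + a n := by
    intro m n
    have hiter := ad_invMPT_iterate hT (m + 1)
    have himg : IsFinPartition R ((joinSeq T α n).image (fun A => T^[m + 1] ⁻¹' A)) :=
      ad_image_part hXp hiter (hpart n)
    calc a (m + 1 + n)
        = Hent R μ (pJoin (joinSeq T α m)
            ((joinSeq T α n).image (fun A => T^[m + 1] ⁻¹' A))) := by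
          show Hent R μ (joinSeq T α (m + 1 + n)) = _
          rw [ad_joinSeq_decomp hT.1 α m n]
      _ ≤ Hent R μ (joinSeq T α m) +
            Hent R μ ((joinSeq T α n).image (fun A => T^[m + 1] ⁻¹' A)) :=
          ad_Hent_subadd hna hXp (hpart m) himg
      _ = a m + a n := by rw [ad_Hent_image hXp hiter]
  set u : ℕ → ℝ := fun n => if n = 0 then 0 else a (n - 1) with hu
  have hus : ∀ k : ℕ, u (k + 1) = a k := by intro k; simp [hu]
  have hu0 : ∀ n, 0 ≤ u n := by
    intro n
    cases n with
    | zero => simp [hu]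
    | succ k => rw [hus]; exact ha0 k
  have hsub : Subadditive u := by
    intro m n
    match m, n with
    | 0, n => simp [hu]
    | m + 1, 0 => simp [hu]
    | m + 1, n + 1 =>
      have h : (m + 1) + (n + 1) = (m + 1 + n) + 1 := by omega
      rw [h, hus, hus, hus]
      exact hkey m n
  have hbdd : BddBelow (Set.range fun n : ℕ => u n / n) := by
    refine ⟨0, ?_⟩
    rintro r ⟨n, rfl⟩
    exact div_nonneg (hu0 n) (Nat.cast_nonneg n)
  have hlim := hsub.tendsto_lim hbdd
  have hfeq : (fun n : ℕ => Hent R μ (joinSeq T α n) / (n + 1)) =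
      (fun n : ℕ => u n / n) ∘ (fun k : ℕ => k + 1) := by
    funext n
    show a n / ((n : ℝ) + 1) = u (n + 1) / ((n + 1 : ℕ) : ℝ)
    rw [hus]
    push_cast
    ring
  have hinf : hsub.lim = ⨅ n : ℕ, Hent R μ (joinSeq T α n) / (n + 1) := by
    rw [Subadditive.lim]
    rw [← sInf_range]
    congr 1
    ext r
    constructor
    · rintro ⟨n, hn, rfl⟩
      obtain ⟨m, rfl⟩ := Nat.exists_eq_add_of_le hn
      refine ⟨m, ?_⟩
      show a m / ((m : ℝ) + 1) = u (1 + m) / ((1 + m : ℕ) : ℝ)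
      rw [show 1 + m = m + 1 by omega, hus]
      push_cast
      ring
    · rintro ⟨m, rfl⟩
      refine ⟨m + 1, by simp, ?_⟩
      show u (m + 1) / ((m + 1 : ℕ) : ℝ) = a m / ((m : ℝ) + 1)
      rw [hus]
      push_cast
      ring
  rw [← hinf, hfeq]
  exact hlim.comp (Filter.tendsto_add_atTop_nat 1)
end

section
/- Let (X,R,μ) and (Y,R',ν) be probability spaces over K, and let T and S be invertible measure preserving transformations of (X,R,μ) and (Y,R',ν) respectively. If T and S are conjugate, i.e. there exists a measure algebra isomorphism Φ : (R,μ) → (R',ν) with Φ(T⁻¹(A)) = S⁻¹(Φ(A)) for every A ∈ R, then the measure-theoretic entropies agree: h_μ(T) = h_ν(S). -/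
open scoped Classical

section Aux

open Set

variable {X Y K : Type*} [NormedField K]
variable {R : Set (Set X)} {μ : Set X → K} {R' : Set (Set Y)} {ν : Set Y → K}
variable {Φ : Set X → Set Y}

lemma aux_inter (hR : IsCoveringRing R) {A B : Set X} (hA : A ∈ R) (hB : B ∈ R) :
    A ∩ B ∈ R := (hR.2 A hA B hB).1

lemma aux_union (hR : IsCoveringRing R) {A B : Set X} (hA : A ∈ R) (hB : B ∈ R) :
    A ∪ B ∈ R := (hR.2 A hA B hB).2.1

lemma aux_diff (hR : IsCoveringRing R) {A B : Set X} (hA : A ∈ R) (hB : B ∈ R) :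
    A \ B ∈ R := (hR.2 A hA B hB).2.2

lemma aux_compl (hR : IsCoveringRing R) (hu : Set.univ ∈ R) {A : Set X} (hA : A ∈ R) :
    Set.univ \ A ∈ R := aux_diff hR hu hA

lemma aux_empty (hR : IsCoveringRing R) (hu : Set.univ ∈ R) : (∅ : Set X) ∈ R := by
  simpa using aux_diff hR hu hu

lemma phi_univ (hR : IsCoveringRing R) (hu : Set.univ ∈ R)
    (hΦ : IsMeasAlgIso R μ R' ν Φ) : Φ Set.univ = Set.univ := by
  have h1 : Φ (Set.univ \ Set.univ) = Set.univ \ Φ Set.univ := hΦ.2.2.1 _ hu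
  rw [Set.diff_self] at h1
  have h2 : Φ (Set.univ ∪ ∅) = Φ Set.univ ∪ Φ (∅ : Set X) :=
    hΦ.2.1 _ hu _ (aux_empty hR hu)
  rw [Set.union_empty, h1] at h2
  rw [h2, Set.union_diff_self, Set.union_univ]

lemma phi_empty (hR : IsCoveringRing R) (hu : Set.univ ∈ R)
    (hΦ : IsMeasAlgIso R μ R' ν Φ) : Φ (∅ : Set X) = ∅ := by
  have h1 : Φ (Set.univ \ Set.univ) = Set.univ \ Φ Set.univ := hΦ.2.2.1 _ hu
  rw [Set.diff_self, phi_univ hR hu hΦ, Set.diff_self] at h1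
  exact h1

lemma phi_inter (hR : IsCoveringRing R) (hu : Set.univ ∈ R)
    (hΦ : IsMeasAlgIso R μ R' ν Φ) {A B : Set X} (hA : A ∈ R) (hB : B ∈ R) :
    Φ (A ∩ B) = Φ A ∩ Φ B := by
  have hA' := aux_compl hR hu hA
  have hB' := aux_compl hR hu hB
  have key : A ∩ B = Set.univ \ ((Set.univ \ A) ∪ (Set.univ \ B)) := by
    simp [← Set.compl_eq_univ_diff, Set.compl_union]
  rw [key, hΦ.2.2.1 _ (aux_union hR hA' hB'), hΦ.2.1 _ hA' _ hB',
    hΦ.2.2.1 _ hA, hΦ.2.2.1 _ hB]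
  simp [← Set.compl_eq_univ_diff, Set.compl_union]

lemma phi_empty_iff (hR : IsCoveringRing R) (hu : Set.univ ∈ R)
    (hΦ : IsMeasAlgIso R μ R' ν Φ) {A : Set X} (hA : A ∈ R) :
    Φ A = ∅ ↔ A = ∅ := by
  constructor
  · intro h
    exact hΦ.1.injOn hA (aux_empty hR hu) (by rw [h, phi_empty hR hu hΦ])
  · rintro rfl; exact phi_empty hR hu hΦ

lemma phi_subset_iff (hR : IsCoveringRing R) (hu : Set.univ ∈ R)
    (hΦ : IsMeasAlgIso R μ R' ν Φ) {A B : Set X} (hA : A ∈ R) (hB : B ∈ R) :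
    Φ A ⊆ Φ B ↔ A ⊆ B := by
  constructor
  · intro h
    have : Φ (A ∩ B) = Φ A := by
      rw [phi_inter hR hu hΦ hA hB, Set.inter_eq_left.2 h]
    have := hΦ.1.injOn (aux_inter hR hA hB) hA this
    rw [← this]; exact Set.inter_subset_right
  · intro h
    have : Φ (A ∩ B) = Φ A := by rw [Set.inter_eq_left.2 h]
    rw [phi_inter hR hu hΦ hA hB] at this
    rw [← this]; exact Set.inter_subset_right

lemma setNorm_phi (hR : IsCoveringRing R) (hu : Set.univ ∈ R)
    (hΦ : IsMeasAlgIso R μ R' ν Φ) {A : Set X} (hA : A ∈ R) :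
    setNorm R' ν (Φ A) = setNorm R μ A := by
  unfold setNorm
  congr 1
  ext r
  constructor
  · rintro ⟨B', hB', hsub, rfl⟩
    obtain ⟨B, hB, rfl⟩ := hΦ.1.surjOn hB'
    refine ⟨B, hB, (phi_subset_iff hR hu hΦ hB hA).1 hsub, ?_⟩
    rw [hΦ.2.2.2 B hB]
  · rintro ⟨B, hB, hsub, rfl⟩
    exact ⟨Φ B, hΦ.1.mapsTo hB, (phi_subset_iff hR hu hΦ hB hA).2 hsub,
      by rw [hΦ.2.2.2 B hB]⟩

lemma aux_sUnion_mem (hR : IsCoveringRing R) (hu : Set.univ ∈ R)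
    (α : Finset (Set X)) (hα : ∀ A ∈ α, A ∈ R) : ⋃₀ (α : Set (Set X)) ∈ R := by
  classical
  induction α using Finset.induction_on with
  | empty => simpa using aux_empty hR hu
  | @insert A s hA ih =>
    rw [Finset.coe_insert, Set.sUnion_insert]
    exact aux_union hR (hα A (Finset.mem_insert_self A s))
      (ih fun B hB => hα B (Finset.mem_insert_of_mem hB))

lemma phi_sUnion (hR : IsCoveringRing R) (hu : Set.univ ∈ R)
    (hΦ : IsMeasAlgIso R μ R' ν Φ)
    (α : Finset (Set X)) (hα : ∀ A ∈ α, A ∈ R) :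
    Φ (⋃₀ (α : Set (Set X))) = ⋃₀ ((α.image Φ : Finset (Set Y)) : Set (Set Y)) := by
  classical
  induction α using Finset.induction_on with
  | empty => simpa using phi_empty hR hu hΦ
  | @insert A s hA ih =>
    rw [Finset.coe_insert, Set.sUnion_insert, Finset.image_insert, Finset.coe_insert,
      Set.sUnion_insert,
      hΦ.2.1 A (hα A (Finset.mem_insert_self A s)) _
        (aux_sUnion_mem hR hu s fun B hB => hα B (Finset.mem_insert_of_mem hB)),
      ih fun B hB => hα B (Finset.mem_insert_of_mem hB)]

end Aux
section Aux2

variable {X Y K : Type*} [NormedField K]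
variable {R : Set (Set X)} {μ : Set X → K} {R' : Set (Set Y)} {ν : Set Y → K}
variable {Φ : Set X → Set Y} {T : X → X} {S : Y → Y}

lemma iterate_preimage_mem (hT : ∀ A ∈ R, T ⁻¹' A ∈ R) (k : ℕ) {A : Set X} (hA : A ∈ R) :
    T^[k] ⁻¹' A ∈ R := by
  induction k with
  | zero => simpa using hA
  | succ n ih =>
    rw [Function.iterate_succ, Set.preimage_comp]
    exact hT _ ih

lemma phi_iterate (hR : IsCoveringRing R) (hu : Set.univ ∈ R)
    (hΦ : IsMeasAlgIso R μ R' ν Φ) (hT : ∀ A ∈ R, T ⁻¹' A ∈ R)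
    (hΦT : ∀ A ∈ R, Φ (T ⁻¹' A) = S ⁻¹' (Φ A)) (k : ℕ) {A : Set X} (hA : A ∈ R) :
    Φ (T^[k] ⁻¹' A) = S^[k] ⁻¹' (Φ A) := by
  induction k with
  | zero => simp
  | succ n ih =>
    rw [Function.iterate_succ, Set.preimage_comp, hΦT _ (iterate_preimage_mem hT n hA), ih,
      Function.iterate_succ, Set.preimage_comp]

lemma pJoin_mem (hR : IsCoveringRing R) {α β : Finset (Set X)}
    (hα : ∀ A ∈ α, A ∈ R) (hβ : ∀ B ∈ β, B ∈ R) :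
    ∀ C ∈ pJoin α β, C ∈ R := by
  intro C hC
  simp only [pJoin, Finset.mem_filter, Finset.mem_image₂] at hC
  obtain ⟨⟨A, hA, B, hB, rfl⟩, -⟩ := hC
  exact aux_inter hR (hα A hA) (hβ B hB)

lemma joinSeq_mem (hR : IsCoveringRing R) (hT : ∀ A ∈ R, T ⁻¹' A ∈ R)
    {α : Finset (Set X)} (hα : ∀ A ∈ α, A ∈ R) (n : ℕ) :
    ∀ C ∈ joinSeq T α n, C ∈ R := by
  induction n with
  | zero => exact hα
  | succ n ih =>
    refine pJoin_mem hR ih ?_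
    intro B hB
    simp only [Finset.mem_image] at hB
    obtain ⟨A, hA, rfl⟩ := hB
    exact iterate_preimage_mem hT _ (hα A hA)

lemma image_pJoin (hR : IsCoveringRing R) (hu : Set.univ ∈ R)
    (hΦ : IsMeasAlgIso R μ R' ν Φ) {α β : Finset (Set X)}
    (hα : ∀ A ∈ α, A ∈ R) (hβ : ∀ B ∈ β, B ∈ R) :
    (pJoin α β).image Φ = pJoin (α.image Φ) (β.image Φ) := by
  ext C'
  simp only [pJoin, Finset.mem_image, Finset.mem_filter, Finset.mem_image₂]
  constructor
  · rintro ⟨C, ⟨⟨A, hA, B, hB, rfl⟩, hne⟩, rfl⟩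
    refine ⟨⟨Φ A, ⟨A, hA, rfl⟩, Φ B, ⟨B, hB, rfl⟩, (phi_inter hR hu hΦ (hα A hA) (hβ B hB)).symm⟩, ?_⟩
    exact fun h => hne ((phi_empty_iff hR hu hΦ (aux_inter hR (hα A hA) (hβ B hB))).1 h)
  · rintro ⟨⟨A', ⟨A, hA, rfl⟩, B', ⟨B, hB, rfl⟩, rfl⟩, hne⟩
    rw [← phi_inter hR hu hΦ (hα A hA) (hβ B hB)] at hne ⊢
    refine ⟨A ∩ B, ⟨⟨A, hA, B, hB, rfl⟩, ?_⟩, rfl⟩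
    exact fun h => hne (by rw [h, phi_empty hR hu hΦ])

lemma image_joinSeq (hR : IsCoveringRing R) (hu : Set.univ ∈ R)
    (hΦ : IsMeasAlgIso R μ R' ν Φ) (hT : ∀ A ∈ R, T ⁻¹' A ∈ R)
    (hΦT : ∀ A ∈ R, Φ (T ⁻¹' A) = S ⁻¹' (Φ A))
    {α : Finset (Set X)} (hα : ∀ A ∈ α, A ∈ R) (n : ℕ) :
    (joinSeq T α n).image Φ = joinSeq S (α.image Φ) n := by
  induction n with
  | zero => rfl
  | succ n ih =>
    show ((pJoin _ _).image Φ) = pJoin _ _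
    rw [image_pJoin hR hu hΦ (joinSeq_mem hR hT hα n)
      (fun B hB => by
        simp only [Finset.mem_image] at hB
        obtain ⟨A, hA, rfl⟩ := hB
        exact iterate_preimage_mem hT _ (hα A hA)), ih]
    congr 1
    rw [Finset.image_image, Finset.image_image]
    exact Finset.image_congr fun A hA => phi_iterate hR hu hΦ hT hΦT (n + 1) (hα A hA)

lemma Mcard_image (hR : IsCoveringRing R) (hu : Set.univ ∈ R)
    (hΦ : IsMeasAlgIso R μ R' ν Φ) {β : Finset (Set X)} (hβ : ∀ A ∈ β, A ∈ R) :
    Mcard R' ν (β.image Φ) = Mcard R μ β := by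
  unfold Mcard
  rw [Finset.filter_image]
  rw [Finset.card_image_of_injOn (hΦ.1.injOn.mono ?_)]
  · congr 1
    apply Finset.filter_congr
    intro A hA
    rw [setNorm_phi hR hu hΦ (hβ A hA)]
  · intro A hA
    simp only [Finset.coe_filter, Set.mem_setOf_eq] at hA
    exact hβ A hA.1

lemma Hent_image (hR : IsCoveringRing R) (hu : Set.univ ∈ R)
    (hΦ : IsMeasAlgIso R μ R' ν Φ) {β : Finset (Set X)} (hβ : ∀ A ∈ β, A ∈ R) :
    Hent R' ν (β.image Φ) = Hent R μ β := by
  unfold Hent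
  rw [Mcard_image hR hu hΦ hβ]
  congr 2
  ext r
  simp only [Set.mem_setOf_eq, Finset.mem_image]
  constructor
  · rintro ⟨A', ⟨A, hA, rfl⟩, hpos, rfl⟩
    rw [setNorm_phi hR hu hΦ (hβ A hA)] at hpos ⊢
    exact ⟨A, hA, hpos, rfl⟩
  · rintro ⟨A, hA, hpos, rfl⟩
    refine ⟨Φ A, ⟨A, hA, rfl⟩, ?_, ?_⟩ <;>
      rw [setNorm_phi hR hu hΦ (hβ A hA)]
    exact hpos

lemma hMeasPart_image (hR : IsCoveringRing R) (hu : Set.univ ∈ R)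
    (hΦ : IsMeasAlgIso R μ R' ν Φ) (hT : ∀ A ∈ R, T ⁻¹' A ∈ R)
    (hΦT : ∀ A ∈ R, Φ (T ⁻¹' A) = S ⁻¹' (Φ A))
    {α : Finset (Set X)} (hα : ∀ A ∈ α, A ∈ R) :
    hMeasPart R' ν S (α.image Φ) = hMeasPart R μ T α := by
  unfold hMeasPart
  congr 1
  funext n
  rw [← image_joinSeq hR hu hΦ hT hΦT hα n,
    Hent_image hR hu hΦ (joinSeq_mem hR hT hα n)]

lemma isFinPartition_image (hR : IsCoveringRing R) (hu : Set.univ ∈ R)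
    (hΦ : IsMeasAlgIso R μ R' ν Φ) {α : Finset (Set X)} (hα : IsFinPartition R α) :
    IsFinPartition R' (α.image Φ) := by
  obtain ⟨hmem, hne, hdisj, hcover⟩ := hα
  refine ⟨?_, ?_, ?_, ?_⟩
  · intro A' hA'
    simp only [Finset.mem_image] at hA'
    obtain ⟨A, hA, rfl⟩ := hA'
    exact hΦ.1.mapsTo (hmem A hA)
  · intro A' hA'
    simp only [Finset.mem_image] at hA'
    obtain ⟨A, hA, rfl⟩ := hA'
    exact fun h => hne A hA ((phi_empty_iff hR hu hΦ (hmem A hA)).1 h)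
  · intro A' hA' B' hB' hne'
    simp only [Finset.mem_image] at hA' hB'
    obtain ⟨A, hA, rfl⟩ := hA'
    obtain ⟨B, hB, rfl⟩ := hB'
    have hAB : A ≠ B := fun h => hne' (by rw [h])
    have : A ∩ B = ∅ := Set.disjoint_iff_inter_eq_empty.1 (hdisj A hA B hB hAB)
    rw [Set.disjoint_iff_inter_eq_empty, ← phi_inter hR hu hΦ (hmem A hA) (hmem B hB), this,
      phi_empty hR hu hΦ]
  · rw [← phi_sUnion hR hu hΦ α hmem, hcover, phi_univ hR hu hΦ]

lemma hMeas_subset (hR : IsCoveringRing R) (hu : Set.univ ∈ R)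
    (hΦ : IsMeasAlgIso R μ R' ν Φ) (hT : ∀ A ∈ R, T ⁻¹' A ∈ R)
    (hΦT : ∀ A ∈ R, Φ (T ⁻¹' A) = S ⁻¹' (Φ A)) :
    {r : ℝ | ∃ α : Finset (Set X), IsFinPartition R α ∧ r = hMeasPart R μ T α} ⊆
      {r : ℝ | ∃ β : Finset (Set Y), IsFinPartition R' β ∧ r = hMeasPart R' ν S β} := by
  rintro r ⟨α, hα, rfl⟩
  exact ⟨α.image Φ, isFinPartition_image hR hu hΦ hα,
    (hMeasPart_image hR hu hΦ hT hΦT hα.1).symm⟩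

end Aux2
/-- Conjugate invertible measure preserving transformations have the same
measure-theoretic entropy. -/
theorem stmt16 {X Y K : Type*} [NontriviallyNormedField K] [CompleteSpace K]
    (hna : IsNonarchimedean (norm : K → ℝ))
    (R : Set (Set X)) (μ : Set X → K) (hXp : IsProbSpace R μ)
    (R' : Set (Set Y)) (ν : Set Y → K) (hYp : IsProbSpace R' ν)
    (T : X → X) (hT : IsInvMPT R μ T) (S : Y → Y) (hS : IsInvMPT R' ν S)
    (Φ : Set X → Set Y) (hΦ : IsMeasAlgIso R μ R' ν Φ)
    (hΦT : ∀ A ∈ R, Φ (T ⁻¹' A) = S ⁻¹' (Φ A)) :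
    hMeas R μ T = hMeas R' ν S := by
  obtain ⟨hRring, huR, -, -⟩ := hXp
  obtain ⟨hR'ring, huR', -, -⟩ := hYp
  set Ψ : Set Y → Set X := Function.invFunOn Φ R with hΨdef
  have hinv : Set.InvOn Ψ Φ R R' := hΦ.1.invOn_invFunOn
  have hΨmaps : Set.MapsTo Ψ R' R := by
    intro A' hA'
    obtain ⟨A, hA, rfl⟩ := hΦ.1.surjOn hA'
    rw [hinv.1 hA]; exact hA
  have hΨ : IsMeasAlgIso R' ν R μ Ψ := by
    refine ⟨hinv.symm.bijOn hΨmaps hΦ.1.mapsTo, ?_, ?_, ?_⟩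
    · intro A' hA' B' hB'
      obtain ⟨A, hA, rfl⟩ := hΦ.1.surjOn hA'
      obtain ⟨B, hB, rfl⟩ := hΦ.1.surjOn hB'
      rw [← hΦ.2.1 A hA B hB, hinv.1 (aux_union hRring hA hB), hinv.1 hA, hinv.1 hB]
    · intro A' hA'
      obtain ⟨A, hA, rfl⟩ := hΦ.1.surjOn hA'
      rw [← hΦ.2.2.1 A hA, hinv.1 (aux_compl hRring huR hA), hinv.1 hA]
    · intro A' hA'
      obtain ⟨A, hA, rfl⟩ := hΦ.1.surjOn hA'
      rw [hinv.1 hA, hΦ.2.2.2 A hA]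
  have hΨS : ∀ A' ∈ R', Ψ (S ⁻¹' A') = T ⁻¹' (Ψ A') := by
    intro A' hA'
    obtain ⟨A, hA, rfl⟩ := hΦ.1.surjOn hA'
    rw [← hΦT A hA, hinv.1 (hT.2.2.1 A hA), hinv.1 hA]
  unfold hMeas
  congr 1
  exact Set.Subset.antisymm (hMeas_subset hRring huR hΦ hT.2.2.1 hΦT)
    (hMeas_subset hR'ring huR' hΨ hS.2.2.1 hΨS)
end

section
/- Let (X,R,μ) be a probability space over K with R separating, such that X is compact in the topology generated by R (the members of R form a base of open sets). Suppose that X₀(μ) = ∅ and that ‖A‖_μ = 1 for every nonempty A ∈ R. Let T be an invertible measure preserving transformation of (X,R,μ) (note that T is then a homeomorphism for this topology). Then the measure-theoretic entropy equals the topological entropy: h_μ(T) = h_top(T). -/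
open scoped Classical

section Stmt19Aux

open Filter Set

variable {X : Type*}

/-- refinement of covers -/
def Refines (𝒱 𝒰 : Finset (Set X)) : Prop := ∀ V ∈ 𝒱, ∃ U ∈ 𝒰, V ⊆ U

theorem refines_trans {𝒲 𝒱 𝒰 : Finset (Set X)} (h1 : Refines 𝒲 𝒱) (h2 : Refines 𝒱 𝒰) :
    Refines 𝒲 𝒰 := fun W hW => by
  obtain ⟨V, hV, hWV⟩ := h1 W hW
  obtain ⟨U, hU, hVU⟩ := h2 V hV
  exact ⟨U, hU, hWV.trans hVU⟩

theorem mem_cJoin {𝒰 𝒲 : Finset (Set X)} {C : Set X} :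
    C ∈ cJoin 𝒰 𝒲 ↔ ∃ U ∈ 𝒰, ∃ W ∈ 𝒲, U ∩ W = C := Finset.mem_image₂

theorem isCover_cJoin {𝒰 𝒲 : Finset (Set X)}
    (h1 : ⋃₀ (𝒰 : Set (Set X)) = Set.univ) (h2 : ⋃₀ (𝒲 : Set (Set X)) = Set.univ) :
    ⋃₀ ((cJoin 𝒰 𝒲 : Finset (Set X)) : Set (Set X)) = Set.univ := by
  apply Set.eq_univ_of_forall
  intro x
  obtain ⟨U, hU, hxU⟩ := Set.eq_univ_iff_forall.mp h1 x
  obtain ⟨W, hW, hxW⟩ := Set.eq_univ_iff_forall.mp h2 x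
  exact Set.mem_sUnion.mpr ⟨U ∩ W, Finset.mem_coe.mpr
    (mem_cJoin.mpr ⟨U, Finset.mem_coe.mp hU, W, Finset.mem_coe.mp hW, rfl⟩), hxU, hxW⟩

theorem isCover_image_preimage {𝒰 : Finset (Set X)} (f : X → X)
    (h : ⋃₀ (𝒰 : Set (Set X)) = Set.univ) :
    ⋃₀ ((𝒰.image fun U => f ⁻¹' U : Finset (Set X)) : Set (Set X)) = Set.univ := by
  apply Set.eq_univ_of_forall
  intro x
  obtain ⟨U, hU, hxU⟩ := Set.eq_univ_iff_forall.mp h (f x)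
  exact Set.mem_sUnion.mpr ⟨f ⁻¹' U,
    Finset.mem_coe.mpr (Finset.mem_image_of_mem _ (Finset.mem_coe.mp hU)), hxU⟩

theorem coverN_le {𝒰 𝒱 : Finset (Set X)} (hsub : 𝒱 ⊆ 𝒰)
    (hcov : ⋃₀ (𝒱 : Set (Set X)) = Set.univ) : coverN 𝒰 ≤ 𝒱.card :=
  Nat.sInf_le ⟨𝒱, hsub, hcov, rfl⟩

theorem exists_min_subcover {𝒰 : Finset (Set X)} (h : ⋃₀ (𝒰 : Set (Set X)) = Set.univ) :
    ∃ 𝒱 : Finset (Set X), 𝒱 ⊆ 𝒰 ∧ ⋃₀ (𝒱 : Set (Set X)) = Set.univ ∧ 𝒱.card = coverN 𝒰 :=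
  Nat.sInf_mem (⟨𝒰.card, 𝒰, Finset.Subset.rfl, h, rfl⟩ :
    {n : ℕ | ∃ 𝒱 : Finset (Set X), 𝒱 ⊆ 𝒰 ∧ ⋃₀ (𝒱 : Set (Set X)) = Set.univ ∧
      𝒱.card = n}.Nonempty)

theorem one_le_coverN [Nonempty X] {𝒰 : Finset (Set X)}
    (h : ⋃₀ (𝒰 : Set (Set X)) = Set.univ) : 1 ≤ coverN 𝒰 := by
  obtain ⟨𝒱, -, hcov, hcard⟩ := exists_min_subcover h
  rcases Nat.eq_zero_or_pos (coverN 𝒰) with h0 | h1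
  · exfalso
    rw [h0, Finset.card_eq_zero] at hcard
    subst hcard
    simp only [Finset.coe_empty, Set.sUnion_empty] at hcov
    exact Set.univ_nonempty.ne_empty hcov.symm
  · exact h1

theorem coverN_cJoin_le {𝒰 𝒲 : Finset (Set X)}
    (h1 : ⋃₀ (𝒰 : Set (Set X)) = Set.univ) (h2 : ⋃₀ (𝒲 : Set (Set X)) = Set.univ) :
    coverN (cJoin 𝒰 𝒲) ≤ coverN 𝒰 * coverN 𝒲 := by
  obtain ⟨𝒰', hs1, hc1, hcard1⟩ := exists_min_subcover h1
  obtain ⟨𝒲', hs2, hc2, hcard2⟩ := exists_min_subcover h2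
  calc coverN (cJoin 𝒰 𝒲) ≤ (cJoin 𝒰' 𝒲').card :=
        coverN_le (Finset.image₂_subset hs1 hs2) (isCover_cJoin hc1 hc2)
    _ ≤ 𝒰'.card * 𝒲'.card := Finset.card_image₂_le _ _ _
    _ = coverN 𝒰 * coverN 𝒲 := by rw [hcard1, hcard2]

theorem coverN_image_preimage_le {𝒰 : Finset (Set X)} (f : X → X)
    (h : ⋃₀ (𝒰 : Set (Set X)) = Set.univ) :
    coverN (𝒰.image fun U => f ⁻¹' U) ≤ coverN 𝒰 := by
  obtain ⟨𝒰', hs, hc, hcard⟩ := exists_min_subcover h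
  calc coverN (𝒰.image fun U => f ⁻¹' U) ≤ (𝒰'.image fun U => f ⁻¹' U).card :=
      coverN_le (Finset.image_subset_image hs) (isCover_image_preimage f hc)
    _ ≤ 𝒰'.card := Finset.card_image_le
    _ = coverN 𝒰 := hcard

theorem coverN_le_of_refines {𝒰 𝒱 : Finset (Set X)}
    (hV : ⋃₀ (𝒱 : Set (Set X)) = Set.univ) (href : Refines 𝒱 𝒰) :
    coverN 𝒰 ≤ coverN 𝒱 := by
  classical
  obtain ⟨𝒱', hs, hc, hcard⟩ := exists_min_subcover hV
  refine le_trans (coverN_le (𝒱 := 𝒱'.image fun V => if h : ∃ U ∈ 𝒰, V ⊆ U then h.choose else ∅)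
    ?_ ?_) ?_
  · intro U hU
    obtain ⟨V, hVm, rfl⟩ := Finset.mem_image.mp hU
    have h : ∃ U ∈ 𝒰, V ⊆ U := href V (hs hVm)
    rw [dif_pos h]
    exact h.choose_spec.1
  · apply Set.eq_univ_of_forall
    intro x
    obtain ⟨V, hVm, hxV⟩ := Set.eq_univ_iff_forall.mp hc x
    have hVm' : V ∈ 𝒱' := Finset.mem_coe.mp hVm
    have h : ∃ U ∈ 𝒰, V ⊆ U := href V (hs hVm')
    refine Set.mem_sUnion.mpr ⟨_, Finset.mem_coe.mpr (Finset.mem_image_of_mem _ hVm'), ?_⟩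
    rw [dif_pos h]
    exact h.choose_spec.2 hxV
  · exact le_trans Finset.card_image_le (le_of_eq hcard)

theorem refines_cJoin {𝒰 𝒱 𝒲 𝒲' : Finset (Set X)} (h1 : Refines 𝒱 𝒰) (h2 : Refines 𝒲' 𝒲) :
    Refines (cJoin 𝒱 𝒲') (cJoin 𝒰 𝒲) := by
  intro C hC
  obtain ⟨V, hV, W', hW', rfl⟩ := mem_cJoin.mp hC
  obtain ⟨U, hU, hVU⟩ := h1 V hV
  obtain ⟨W, hW, hW'W⟩ := h2 W' hW'
  exact ⟨U ∩ W, mem_cJoin.mpr ⟨U, hU, W, hW, rfl⟩, Set.inter_subset_inter hVU hW'W⟩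

theorem refines_image_preimage {𝒰 𝒱 : Finset (Set X)} (f : X → X) (h : Refines 𝒱 𝒰) :
    Refines (𝒱.image fun U => f ⁻¹' U) (𝒰.image fun U => f ⁻¹' U) := by
  intro C hC
  obtain ⟨V, hV, rfl⟩ := Finset.mem_image.mp hC
  obtain ⟨U, hU, hVU⟩ := h V hV
  exact ⟨f ⁻¹' U, Finset.mem_image_of_mem _ hU, Set.preimage_mono hVU⟩

theorem refines_cJoinSeq (T : X → X) {𝒰 𝒱 : Finset (Set X)} (h : Refines 𝒱 𝒰) :
    ∀ n, Refines (cJoinSeq T 𝒱 n) (cJoinSeq T 𝒰 n)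
  | 0 => h
  | n + 1 => refines_cJoin (refines_cJoinSeq T h n) (refines_image_preimage _ h)

theorem isCover_cJoinSeq (T : X → X) {𝒰 : Finset (Set X)}
    (h : ⋃₀ (𝒰 : Set (Set X)) = Set.univ) :
    ∀ n, ⋃₀ ((cJoinSeq T 𝒰 n : Finset (Set X)) : Set (Set X)) = Set.univ
  | 0 => h
  | n + 1 => isCover_cJoin (isCover_cJoinSeq T h n) (isCover_image_preimage _ h)

theorem cJoinSeq_add (T : X → X) (𝒰 : Finset (Set X)) (a b : ℕ) :
    cJoinSeq T 𝒰 (a + b + 1) =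
      cJoin (cJoinSeq T 𝒰 a) ((cJoinSeq T 𝒰 b).image fun U => T^[a + 1] ⁻¹' U) := by
  induction b with
  | zero => rfl
  | succ b ih =>
    have e1 : a + (b + 1) + 1 = (a + b + 1) + 1 := by omega
    rw [e1]
    have e2 : cJoinSeq T 𝒰 ((a + b + 1) + 1) =
        cJoin (cJoinSeq T 𝒰 (a + b + 1)) (𝒰.image fun U => T^[(a + b + 1) + 1] ⁻¹' U) := rfl
    have e3 : cJoinSeq T 𝒰 (b + 1) =
        cJoin (cJoinSeq T 𝒰 b) (𝒰.image fun U => T^[b + 1] ⁻¹' U) := rfl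
    rw [e2, ih, e3]
    have himg : ((𝒰.image fun U => T^[b + 1] ⁻¹' U).image fun U => T^[a + 1] ⁻¹' U) =
        𝒰.image fun U => T^[(a + b + 1) + 1] ⁻¹' U := by
      rw [Finset.image_image]
      apply Finset.image_congr
      intro U _
      show T^[a + 1] ⁻¹' (T^[b + 1] ⁻¹' U) = _
      rw [← Set.preimage_comp, ← Function.iterate_add]
      have e : b + 1 + (a + 1) = (a + b + 1) + 1 := by omega
      rw [e]
    have hdistrib : ((cJoin (cJoinSeq T 𝒰 b) (𝒰.image fun U => T^[b + 1] ⁻¹' U)).image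
        fun U => T^[a + 1] ⁻¹' U) =
        cJoin ((cJoinSeq T 𝒰 b).image fun U => T^[a + 1] ⁻¹' U)
          ((𝒰.image fun U => T^[b + 1] ⁻¹' U).image fun U => T^[a + 1] ⁻¹' U) :=
      Finset.image_image₂_distrib fun A B => Set.preimage_inter
    rw [hdistrib, himg]
    exact Finset.image₂_assoc fun a b c => Set.inter_assoc a b c

end Stmt19Aux
section Stmt19Aux2

open Filter Set

variable {X : Type*}

/-- auxiliary subadditive sequence -/
noncomputable def uAux (T : X → X) (𝒰 : Finset (Set X)) : ℕ → ℝ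
  | 0 => 0
  | n + 1 => Htop (cJoinSeq T 𝒰 n)

theorem tendsto_hTopCov [Nonempty X] (T : X → X) {𝒰 : Finset (Set X)}
    (hcov : ⋃₀ (𝒰 : Set (Set X)) = Set.univ) :
    Filter.Tendsto (fun n : ℕ => Htop (cJoinSeq T 𝒰 n) / (n + 1)) Filter.atTop
      (nhds (hTopCov T 𝒰)) := by
  have hN : ∀ n, 1 ≤ coverN (cJoinSeq T 𝒰 n) := fun n => one_le_coverN (isCover_cJoinSeq T hcov n)
  have hHnn : ∀ n, 0 ≤ Htop (cJoinSeq T 𝒰 n) := fun n =>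
    Real.logb_nonneg one_lt_two (by exact_mod_cast hN n)
  have hunn : ∀ n, 0 ≤ uAux T 𝒰 n := by
    rintro (_ | m)
    · exact le_refl 0
    · exact hHnn m
  have hsub : Subadditive (uAux T 𝒰) := by
    rintro (_ | m) n
    · rw [Nat.zero_add]
      exact le_add_of_nonneg_left (hunn 0)
    · rcases n with _ | n
      · exact le_add_of_nonneg_right (hunn 0)
      · have e1 : (m + 1) + (n + 1) = (m + n + 1) + 1 := by omega
        rw [e1]
        have e2 : uAux T 𝒰 ((m + n + 1) + 1) = Htop (cJoinSeq T 𝒰 (m + n + 1)) := rfl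
        have e3 : uAux T 𝒰 (m + 1) = Htop (cJoinSeq T 𝒰 m) := rfl
        have e4 : uAux T 𝒰 (n + 1) = Htop (cJoinSeq T 𝒰 n) := rfl
        rw [e2, e3, e4]
        have key : coverN (cJoinSeq T 𝒰 (m + n + 1)) ≤
            coverN (cJoinSeq T 𝒰 m) * coverN (cJoinSeq T 𝒰 n) := by
          rw [cJoinSeq_add T 𝒰 m n]
          exact le_trans (coverN_cJoin_le (isCover_cJoinSeq T hcov m)
              (isCover_image_preimage _ (isCover_cJoinSeq T hcov n)))
            (Nat.mul_le_mul_left _ (coverN_image_preimage_le _ (isCover_cJoinSeq T hcov n)))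
        have h1 : (0:ℝ) < (coverN (cJoinSeq T 𝒰 (m + n + 1)) : ℝ) := by
          exact_mod_cast Nat.lt_of_lt_of_le Nat.zero_lt_one (hN _)
        have h2 : (0:ℝ) < (coverN (cJoinSeq T 𝒰 m) : ℝ) := by
          exact_mod_cast Nat.lt_of_lt_of_le Nat.zero_lt_one (hN _)
        have h3 : (0:ℝ) < (coverN (cJoinSeq T 𝒰 n) : ℝ) := by
          exact_mod_cast Nat.lt_of_lt_of_le Nat.zero_lt_one (hN _)
        calc Htop (cJoinSeq T 𝒰 (m + n + 1))
            = Real.logb 2 (coverN (cJoinSeq T 𝒰 (m + n + 1))) := rfl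
          _ ≤ Real.logb 2 ((coverN (cJoinSeq T 𝒰 m) : ℝ) * (coverN (cJoinSeq T 𝒰 n) : ℝ)) := by
              apply Real.logb_le_logb_of_le one_lt_two h1
              exact_mod_cast key
          _ = Htop (cJoinSeq T 𝒰 m) + Htop (cJoinSeq T 𝒰 n) :=
              Real.logb_mul (ne_of_gt h2) (ne_of_gt h3)
  have hbdd : BddBelow (Set.range fun n : ℕ => uAux T 𝒰 n / n) := by
    refine ⟨0, ?_⟩
    rintro r ⟨n, rfl⟩
    exact div_nonneg (hunn n) (Nat.cast_nonneg n)
  have htends := hsub.tendsto_lim hbdd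
  have h2 := htends.comp (tendsto_add_atTop_nat 1)
  have h3 : (fun n : ℕ => Htop (cJoinSeq T 𝒰 n) / ((n : ℝ) + 1)) =
      (fun n : ℕ => uAux T 𝒰 n / n) ∘ (fun n : ℕ => n + 1) := by
    funext n
    show Htop (cJoinSeq T 𝒰 n) / ((n : ℝ) + 1) = uAux T 𝒰 (n + 1) / ((n + 1 : ℕ) : ℝ)
    push_cast
    rfl
  rw [h3]
  have h4 : hTopCov T 𝒰 = hsub.lim := by
    apply Filter.Tendsto.limUnder_eq
    rw [h3] at *
    exact h2
  rw [h4]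
  exact h2

theorem hTopCov_le_of_refines [Nonempty X] (T : X → X) {𝒰 𝒱 : Finset (Set X)}
    (hU : ⋃₀ (𝒰 : Set (Set X)) = Set.univ) (hV : ⋃₀ (𝒱 : Set (Set X)) = Set.univ)
    (h : Refines 𝒱 𝒰) : hTopCov T 𝒰 ≤ hTopCov T 𝒱 := by
  refine le_of_tendsto_of_tendsto' (tendsto_hTopCov T hU) (tendsto_hTopCov T hV) ?_
  intro n
  have hle : Htop (cJoinSeq T 𝒰 n) ≤ Htop (cJoinSeq T 𝒱 n) := by
    apply Real.logb_le_logb_of_le one_lt_two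
    · exact_mod_cast Nat.lt_of_lt_of_le Nat.zero_lt_one (one_le_coverN (isCover_cJoinSeq T hU n))
    · exact_mod_cast coverN_le_of_refines (isCover_cJoinSeq T hV n) (refines_cJoinSeq T h n)
  have hpos : (0:ℝ) < (n : ℝ) + 1 := by positivity
  exact div_le_div_of_nonneg_right hle hpos.le
  
end Stmt19Aux2
section Stmt19Aux3

open Filter Set

variable {X : Type*} {K : Type*} [NormedField K]

theorem preimage_iterate_mem {R : Set (Set X)} {μ : Set X → K} {T : X → X}
    (hT : IsInvMPT R μ T) : ∀ (n : ℕ) (A : Set X), A ∈ R → T^[n] ⁻¹' A ∈ R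
  | 0, A, hA => by simpa using hA
  | n + 1, A, hA => by
    rw [Function.iterate_succ', Set.preimage_comp]
    exact preimage_iterate_mem hT n _ (hT.2.2.1 A hA)

/-- pairwise disjointness of a finite family -/
def PDisj (𝒰 : Finset (Set X)) : Prop := ∀ A ∈ 𝒰, ∀ B ∈ 𝒰, A ≠ B → Disjoint A B

theorem pdisj_cJoin {𝒰 𝒲 : Finset (Set X)} (h1 : PDisj 𝒰) (h2 : PDisj 𝒲) :
    PDisj (cJoin 𝒰 𝒲) := by
  intro C hC C' hC' hne
  obtain ⟨A, hA, B, hB, rfl⟩ := mem_cJoin.mp hC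
  obtain ⟨A', hA', B', hB', rfl⟩ := mem_cJoin.mp hC'
  by_cases hAA : A = A'
  · have hBB : B ≠ B' := by rintro rfl; exact hne (by rw [hAA])
    exact Set.disjoint_of_subset Set.inter_subset_right Set.inter_subset_right
      (h2 B hB B' hB' hBB)
  · exact Set.disjoint_of_subset Set.inter_subset_left Set.inter_subset_left
      (h1 A hA A' hA' hAA)

theorem pdisj_image_preimage {𝒰 : Finset (Set X)} (f : X → X) (h : PDisj 𝒰) :
    PDisj (𝒰.image fun U => f ⁻¹' U) := by
  intro C hC C' hC' hne
  obtain ⟨A, hA, rfl⟩ := Finset.mem_image.mp hC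
  obtain ⟨A', hA', rfl⟩ := Finset.mem_image.mp hC'
  have hAA : A ≠ A' := by rintro rfl; exact hne rfl
  exact (h A hA A' hA' hAA).preimage f

theorem pdisj_cJoinSeq (T : X → X) {𝒰 : Finset (Set X)} (h : PDisj 𝒰) :
    ∀ n, PDisj (cJoinSeq T 𝒰 n)
  | 0 => h
  | n + 1 => pdisj_cJoin (pdisj_cJoinSeq T h n) (pdisj_image_preimage _ h)

theorem coverN_eq_card_filter {𝒰 : Finset (Set X)}
    (hcov : ⋃₀ (𝒰 : Set (Set X)) = Set.univ) (hd : PDisj 𝒰) :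
    coverN 𝒰 = (𝒰.filter fun C => C ≠ ∅).card := by
  classical
  have hcovf : ⋃₀ ((𝒰.filter fun C => C ≠ ∅ : Finset (Set X)) : Set (Set X)) = Set.univ := by
    apply Set.eq_univ_of_forall
    intro x
    obtain ⟨A, hA, hxA⟩ := Set.eq_univ_iff_forall.mp hcov x
    have hAne : A ≠ ∅ := by rintro rfl; exact absurd hxA (Set.notMem_empty x)
    exact Set.mem_sUnion.mpr ⟨A, Finset.mem_coe.mpr
      (Finset.mem_filter.mpr ⟨Finset.mem_coe.mp hA, hAne⟩), hxA⟩
  apply le_antisymm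
  · exact coverN_le (Finset.filter_subset _ _) hcovf
  · obtain ⟨𝒲, hsub, hc, hcard⟩ := exists_min_subcover hcov
    rw [← hcard]
    apply Finset.card_le_card
    intro E hE
    obtain ⟨hE𝒰, hEne⟩ := Finset.mem_filter.mp hE
    obtain ⟨x, hxE⟩ := Set.nonempty_iff_ne_empty.mpr hEne
    obtain ⟨W, hW, hxW⟩ := Set.eq_univ_iff_forall.mp hc x
    have hW𝒲 : W ∈ 𝒲 := Finset.mem_coe.mp hW
    have hW𝒰 : W ∈ 𝒰 := hsub hW𝒲
    by_cases hWE : W = E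
    · exact hWE ▸ hW𝒲
    · exact absurd (hd W hW𝒰 E hE𝒰 hWE) (Set.not_disjoint_iff.mpr ⟨x, hxW, hxE⟩)

theorem joinSeq_eq_filter {α : Finset (Set X)} (hne : ∀ A ∈ α, A ≠ ∅) (T : X → X) :
    ∀ n, joinSeq T α n = (cJoinSeq T α n).filter fun C => C ≠ ∅
  | 0 => (Finset.filter_true_of_mem hne).symm
  | n + 1 => by
    show pJoin (joinSeq T α n) (α.image fun A => T^[n + 1] ⁻¹' A) =
      (cJoin (cJoinSeq T α n) (α.image fun A => T^[n + 1] ⁻¹' A)).filter fun C => C ≠ ∅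
    rw [joinSeq_eq_filter hne T n]
    unfold pJoin cJoin
    ext C
    simp only [Finset.mem_filter, Finset.mem_image₂]
    constructor
    · rintro ⟨⟨A, hA, B, hB, rfl⟩, hCne⟩
      exact ⟨⟨A, hA.1, B, hB, rfl⟩, hCne⟩
    · rintro ⟨⟨A, hA, B, hB, rfl⟩, hCne⟩
      have hAne : A ≠ ∅ := by
        rintro rfl
        exact hCne (by simp)
      exact ⟨⟨A, ⟨hA, hAne⟩, B, hB, rfl⟩, hCne⟩

theorem isFinPartition_pJoin {R : Set (Set X)} (hRing : IsCoveringRing R)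
    {α β : Finset (Set X)} (hα : IsFinPartition R α) (hβ : IsFinPartition R β) :
    IsFinPartition R (pJoin α β) := by
  obtain ⟨hαR, hαne, hαd, hαc⟩ := hα
  obtain ⟨hβR, hβne, hβd, hβc⟩ := hβ
  have hmem : ∀ C ∈ pJoin α β, ∃ A ∈ α, ∃ B ∈ β, A ∩ B = C := by
    intro C hC
    obtain ⟨hC1, hC2⟩ := Finset.mem_filter.mp hC
    exact Finset.mem_image₂.mp hC1
  refine ⟨?_, ?_, ?_, ?_⟩
  · intro C hC
    obtain ⟨A, hA, B, hB, rfl⟩ := hmem C hC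
    exact (hRing.2 A (hαR A hA) B (hβR B hB)).1
  · intro C hC
    exact (Finset.mem_filter.mp hC).2
  · intro C hC C' hC' hne
    obtain ⟨A, hA, B, hB, rfl⟩ := hmem C hC
    obtain ⟨A', hA', B', hB', rfl⟩ := hmem C' hC'
    by_cases hAA : A = A'
    · have hBB : B ≠ B' := fun h => hne (by rw [hAA, h])
      exact Set.disjoint_of_subset Set.inter_subset_right Set.inter_subset_right
        (hβd B hB B' hB' hBB)
    · exact Set.disjoint_of_subset Set.inter_subset_left Set.inter_subset_left
        (hαd A hA A' hA' hAA)
  · apply Set.eq_univ_of_forall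
    intro x
    obtain ⟨A, hA, hxA⟩ := Set.eq_univ_iff_forall.mp hαc x
    obtain ⟨B, hB, hxB⟩ := Set.eq_univ_iff_forall.mp hβc x
    have hCne : A ∩ B ≠ ∅ := fun h =>
      absurd (h ▸ (⟨hxA, hxB⟩ : x ∈ A ∩ B) : x ∈ (∅ : Set X)) (Set.notMem_empty x)
    exact Set.mem_sUnion.mpr ⟨A ∩ B, Finset.mem_coe.mpr (Finset.mem_filter.mpr
      ⟨Finset.mem_image₂.mpr ⟨A, Finset.mem_coe.mp hA, B, Finset.mem_coe.mp hB, rfl⟩, hCne⟩),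
      hxA, hxB⟩

theorem isFinPartition_image_preimage {R : Set (Set X)} {μ : Set X → K} {T : X → X}
    (hT : IsInvMPT R μ T) {α : Finset (Set X)} (hα : IsFinPartition R α) (k : ℕ) :
    IsFinPartition R (α.image fun A => T^[k] ⁻¹' A) := by
  obtain ⟨hαR, hαne, hαd, hαc⟩ := hα
  have hsurj : Function.Surjective T^[k] := (hT.1.iterate k).2
  refine ⟨?_, ?_, ?_, ?_⟩
  · intro B hB
    obtain ⟨A, hA, rfl⟩ := Finset.mem_image.mp hB
    exact preimage_iterate_mem hT k A (hαR A hA)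
  · intro B hB
    obtain ⟨A, hA, rfl⟩ := Finset.mem_image.mp hB
    obtain ⟨a, ha⟩ := Set.nonempty_iff_ne_empty.mpr (hαne A hA)
    obtain ⟨x, rfl⟩ := hsurj a
    exact fun h => absurd (h ▸ (Set.mem_preimage.mpr ha)) (Set.notMem_empty x)
  · intro B hB B' hB' hne
    obtain ⟨A, hA, rfl⟩ := Finset.mem_image.mp hB
    obtain ⟨A', hA', rfl⟩ := Finset.mem_image.mp hB'
    have hAA : A ≠ A' := fun h => hne (by rw [h])
    exact (hαd A hA A' hA' hAA).preimage _
  · apply Set.eq_univ_of_forall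
    intro x
    obtain ⟨A, hA, hxA⟩ := Set.eq_univ_iff_forall.mp hαc (T^[k] x)
    exact Set.mem_sUnion.mpr ⟨T^[k] ⁻¹' A,
      Finset.mem_coe.mpr (Finset.mem_image_of_mem _ (Finset.mem_coe.mp hA)), hxA⟩

theorem isFinPartition_joinSeq {R : Set (Set X)} {μ : Set X → K} {T : X → X}
    (hRing : IsCoveringRing R) (hT : IsInvMPT R μ T) {α : Finset (Set X)}
    (hα : IsFinPartition R α) : ∀ n, IsFinPartition R (joinSeq T α n)
  | 0 => hα
  | n + 1 => isFinPartition_pJoin hRing (isFinPartition_joinSeq hRing hT hα n)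
      (isFinPartition_image_preimage hT hα (n + 1))

theorem Hent_eq_logb_card [Nonempty X] {R : Set (Set X)} {μ : Set X → K}
    (hA1 : ∀ A ∈ R, A ≠ ∅ → setNorm R μ A = 1) {β : Finset (Set X)}
    (hβ : IsFinPartition R β) : Hent R μ β = Real.logb 2 β.card := by
  classical
  have hnorm : ∀ A ∈ β, setNorm R μ A = 1 := fun A hA => hA1 A (hβ.1 A hA) (hβ.2.1 A hA)
  have hβne : β.Nonempty := by
    obtain ⟨x⟩ := (inferInstance : Nonempty X)
    obtain ⟨A, hA, -⟩ := Set.eq_univ_iff_forall.mp hβ.2.2.2 x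
    exact ⟨A, Finset.mem_coe.mp hA⟩
  have hM : Mcard R μ β = β.card := by
    unfold Mcard
    rw [Finset.filter_true_of_mem]
    intro A hA
    rw [hnorm A hA]
    norm_num
  have hset : {r : ℝ | ∃ A ∈ β, 0 < setNorm R μ A ∧ r = setNorm R μ A} = {1} := by
    ext r
    simp only [Set.mem_setOf_eq, Set.mem_singleton_iff]
    constructor
    · rintro ⟨A, hA, -, rfl⟩
      exact hnorm A hA
    · rintro rfl
      obtain ⟨A, hA⟩ := hβne
      exact ⟨A, hA, by rw [hnorm A hA]; norm_num, (hnorm A hA).symm⟩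
  unfold Hent
  rw [hset, csInf_singleton, hM, one_mul]

theorem Hent_joinSeq_eq_Htop [Nonempty X] {R : Set (Set X)} {μ : Set X → K} {T : X → X}
    (hRing : IsCoveringRing R) (hT : IsInvMPT R μ T)
    (hA1 : ∀ A ∈ R, A ≠ ∅ → setNorm R μ A = 1) {α : Finset (Set X)}
    (hα : IsFinPartition R α) (n : ℕ) :
    Hent R μ (joinSeq T α n) = Htop (cJoinSeq T α n) := by
  have hpart := isFinPartition_joinSeq hRing hT hα n
  rw [Hent_eq_logb_card hA1 hpart]
  unfold Htop
  rw [coverN_eq_card_filter (isCover_cJoinSeq T hα.2.2.2 n) (pdisj_cJoinSeq T hα.2.2.1 n),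
    ← joinSeq_eq_filter hα.2.1 T n]

theorem hMeasPart_eq_hTopCov [Nonempty X] {R : Set (Set X)} {μ : Set X → K} {T : X → X}
    (hRing : IsCoveringRing R) (hT : IsInvMPT R μ T)
    (hA1 : ∀ A ∈ R, A ≠ ∅ → setNorm R μ A = 1) {α : Finset (Set X)}
    (hα : IsFinPartition R α) : hMeasPart R μ T α = hTopCov T α := by
  unfold hMeasPart hTopCov
  congr 1
  funext n
  rw [Hent_joinSeq_eq_Htop hRing hT hA1 hα n]

end Stmt19Aux3
section Stmt19Aux4

open Filter Set

variable {X : Type*}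

theorem exists_basic_subset {R : Set (Set X)} (hRing : IsCoveringRing R)
    (huniv : Set.univ ∈ R) {U : Set X} (h : TopologicalSpace.GenerateOpen R U) :
    ∀ x ∈ U, ∃ B ∈ R, x ∈ B ∧ B ⊆ U := by
  induction h with
  | basic s hs => exact fun x hx => ⟨s, hs, hx, subset_rfl⟩
  | univ => exact fun x _ => ⟨Set.univ, huniv, trivial, subset_rfl⟩
  | inter s t _ _ ihs iht =>
    intro x hx
    obtain ⟨B₁, hB₁, hxB₁, hB₁s⟩ := ihs x hx.1
    obtain ⟨B₂, hB₂, hxB₂, hB₂t⟩ := iht x hx.2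
    exact ⟨B₁ ∩ B₂, (hRing.2 B₁ hB₁ B₂ hB₂).1, ⟨hxB₁, hxB₂⟩, Set.inter_subset_inter hB₁s hB₂t⟩
  | sUnion S _ ih =>
    rintro x ⟨s, hsS, hxs⟩
    obtain ⟨B, hB, hxB, hBs⟩ := ih s hsS x hxs
    exact ⟨B, hB, hxB, hBs.trans (Set.subset_sUnion_of_mem hsS)⟩

theorem exists_R_refinement {R : Set (Set X)} (hRing : IsCoveringRing R)
    (huniv : Set.univ ∈ R) (hcomp : @CompactSpace X (TopologicalSpace.generateFrom R))
    {𝒰 : Finset (Set X)} (hop : ∀ U ∈ 𝒰, (TopologicalSpace.generateFrom R).IsOpen U)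
    (hcov : ⋃₀ (𝒰 : Set (Set X)) = Set.univ) :
    ∃ 𝒱 : Finset (Set X), (∀ V ∈ 𝒱, V ∈ R) ∧ ⋃₀ (𝒱 : Set (Set X)) = Set.univ ∧
      Refines 𝒱 𝒰 := by
  classical
  letI t : TopologicalSpace X := TopologicalSpace.generateFrom R
  haveI : CompactSpace X := hcomp
  set P : Set X → Prop := fun B => B ∈ R ∧ ∃ U ∈ 𝒰, B ⊆ U with hP
  have hopen : ∀ B : Set X, IsOpen (if P B then B else ∅) := by
    intro B
    by_cases h : P B
    · rw [if_pos h]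
      exact TopologicalSpace.GenerateOpen.basic B h.1
    · rw [if_neg h]
      exact isOpen_empty
  have hcover : (Set.univ : Set X) ⊆ ⋃ B, (if P B then B else ∅) := by
    intro x _
    obtain ⟨U, hU, hxU⟩ := Set.eq_univ_iff_forall.mp hcov x
    obtain ⟨B, hBR, hxB, hBU⟩ :=
      exists_basic_subset hRing huniv (hop U (Finset.mem_coe.mp hU)) x hxU
    have hPB : P B := ⟨hBR, U, Finset.mem_coe.mp hU, hBU⟩
    exact Set.mem_iUnion.mpr ⟨B, by rw [if_pos hPB]; exact hxB⟩
  obtain ⟨s, hs⟩ := IsCompact.elim_finite_subcover isCompact_univ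
    (fun B => if P B then B else ∅) hopen hcover
  refine ⟨s.filter P, ?_, ?_, ?_⟩
  · intro V hV
    exact ((Finset.mem_filter.mp hV).2).1
  · apply Set.eq_univ_of_forall
    intro x
    obtain ⟨B, hBs, hxB⟩ := Set.mem_iUnion₂.mp (hs (Set.mem_univ x))
    have hPB : P B := by
      by_contra h
      rw [if_neg h] at hxB
      exact absurd hxB (Set.notMem_empty x)
    refine Set.mem_sUnion.mpr ⟨B, Finset.mem_coe.mpr (Finset.mem_filter.mpr ⟨hBs, hPB⟩), ?_⟩
    rwa [if_pos hPB] at hxB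
  · intro V hV
    exact ((Finset.mem_filter.mp hV).2).2

theorem biInter_mem {R : Set (Set X)} (hRing : IsCoveringRing R) (huniv : Set.univ ∈ R)
    (f : Set X → Set X) : ∀ S : Finset (Set X), (∀ A ∈ S, f A ∈ R) → (⋂ A ∈ S, f A) ∈ R := by
  intro S
  induction S using Finset.induction_on with
  | empty => intro _; simpa using huniv
  | @insert a s ha ih =>
    intro h
    rw [Finset.set_biInter_insert]
    exact (hRing.2 _ (h _ (Finset.mem_insert_self _ _)) _
      (ih fun A hA => h A (Finset.mem_insert_of_mem hA))).1

/-- the atom of a subset `S` of a cover `𝒱` -/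
abbrev atomOf (𝒱 S : Finset (Set X)) : Set X :=
  (⋂ U ∈ S, U) ∩ ⋂ U ∈ 𝒱 \ S, (Set.univ \ U)

theorem mem_coverPart {𝒱 : Finset (Set X)} {C : Set X} :
    C ∈ coverPart 𝒱 ↔ (∃ S, S ⊆ 𝒱 ∧ atomOf 𝒱 S = C) ∧ C ≠ ∅ := by
  unfold coverPart
  rw [Finset.mem_filter, Finset.mem_image]
  simp only [Finset.mem_powerset]

theorem coverPart_spec {R : Set (Set X)} (hRing : IsCoveringRing R) (huniv : Set.univ ∈ R)
    {𝒱 : Finset (Set X)} (hmem : ∀ V ∈ 𝒱, V ∈ R) (hcov : ⋃₀ (𝒱 : Set (Set X)) = Set.univ) :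
    IsFinPartition R (coverPart 𝒱) ∧ Refines (coverPart 𝒱) 𝒱 := by
  classical
  have hatomR : ∀ S : Finset (Set X), S ⊆ 𝒱 → atomOf 𝒱 S ∈ R := by
    intro S hS
    exact (hRing.2 _ (biInter_mem hRing huniv (fun U => U) S fun A hA => hmem A (hS hA)) _
      (biInter_mem hRing huniv (fun U => Set.univ \ U) (𝒱 \ S)
        fun A hA => (hRing.2 _ huniv _ (hmem A (Finset.mem_sdiff.mp hA).1)).2.2)).1
  have hdisj : ∀ S, S ⊆ 𝒱 → ∀ S', S' ⊆ 𝒱 → ∀ U, U ∈ S → U ∉ S' →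
      Disjoint (atomOf 𝒱 S) (atomOf 𝒱 S') := by
    intro S hS S' _ U hUS hUS'
    apply Set.disjoint_left.mpr
    intro x hx hx'
    have hxU : x ∈ U := Set.iInter₂_subset U hUS hx.1
    have hU𝒱S' : U ∈ 𝒱 \ S' := Finset.mem_sdiff.mpr ⟨hS hUS, hUS'⟩
    exact (Set.iInter₂_subset U hU𝒱S' hx'.2).2 hxU
  have hcover : ∀ x : X, x ∈ atomOf 𝒱 (𝒱.filter fun U => x ∈ U) := by
    intro x
    constructor
    · exact Set.mem_iInter₂.mpr fun U hU => (Finset.mem_filter.mp hU).2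
    · exact Set.mem_iInter₂.mpr fun U hU => ⟨trivial, fun hxU =>
        (Finset.mem_sdiff.mp hU).2 (Finset.mem_filter.mpr ⟨(Finset.mem_sdiff.mp hU).1, hxU⟩)⟩
  constructor
  · refine ⟨?_, ?_, ?_, ?_⟩
    · intro C hC
      obtain ⟨⟨S, hS, rfl⟩, -⟩ := mem_coverPart.mp hC
      exact hatomR S hS
    · intro C hC
      exact (mem_coverPart.mp hC).2
    · intro C hC C' hC' hne
      obtain ⟨⟨S, hS, rfl⟩, -⟩ := mem_coverPart.mp hC
      obtain ⟨⟨S', hS', rfl⟩, -⟩ := mem_coverPart.mp hC'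
      have hSS' : S ≠ S' := fun h => hne (by rw [h])
      by_cases hex : ∃ U ∈ S, U ∉ S'
      · obtain ⟨U, h1, h2⟩ := hex
        exact hdisj S hS S' hS' U h1 h2
      · push_neg at hex
        have hsub : S ⊆ S' := hex
        have hex2 : ∃ U ∈ S', U ∉ S := by
          by_contra h
          push_neg at h
          exact hSS' (Finset.Subset.antisymm hsub h)
        obtain ⟨U, h1, h2⟩ := hex2
        exact (hdisj S' hS' S hS U h1 h2).symm
    · apply Set.eq_univ_of_forall
      intro x
      have hx := hcover x
      have hCne : atomOf 𝒱 (𝒱.filter fun U => x ∈ U) ≠ ∅ := fun h =>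
        absurd (h ▸ hx) (Set.notMem_empty x)
      exact Set.mem_sUnion.mpr ⟨_, Finset.mem_coe.mpr (mem_coverPart.mpr
        ⟨⟨𝒱.filter fun U => x ∈ U, Finset.filter_subset _ _, rfl⟩, hCne⟩), hx⟩
  · intro C hC
    obtain ⟨⟨S, hS, rfl⟩, hCne⟩ := mem_coverPart.mp hC
    have hSne : S.Nonempty := by
      rcases Finset.eq_empty_or_nonempty S with rfl | h
      · exfalso
        obtain ⟨x, hx⟩ := Set.nonempty_iff_ne_empty.mpr hCne
        obtain ⟨U, hU, hxU⟩ := Set.eq_univ_iff_forall.mp hcov x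
        have hU' : U ∈ 𝒱 \ (∅ : Finset (Set X)) :=
          Finset.mem_sdiff.mpr ⟨Finset.mem_coe.mp hU, Finset.notMem_empty U⟩
        exact (Set.iInter₂_subset U hU' hx.2).2 hxU
      · exact h
    obtain ⟨U, hU⟩ := hSne
    exact ⟨U, hS hU, Set.inter_subset_left.trans (Set.iInter₂_subset U hU)⟩

end Stmt19Aux4
/-- If `X` is compact in the topology generated by `R`, `X₀(μ) = ∅` and
`‖A‖_μ = 1` for every nonempty `A ∈ R`, then the measure-theoretic entropy of an
invertible measure preserving transformation equals its topological entropy. -/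
theorem stmt19 {X K : Type*} [NontriviallyNormedField K] [CompleteSpace K]
    (hna : IsNonarchimedean (norm : K → ℝ))
    (R : Set (Set X)) (μ : Set X → K) (hXp : IsProbSpace R μ) (hsep : Separating R)
    (hcomp : @CompactSpace X (TopologicalSpace.generateFrom R))
    (hX0 : ∀ x : X, normFun R μ x ≠ 0)
    (hA1 : ∀ A ∈ R, A ≠ ∅ → setNorm R μ A = 1)
    (T : X → X) (hT : IsInvMPT R μ T) :
    hMeas R μ T = hTop (TopologicalSpace.generateFrom R) T := by
  classical
  obtain ⟨hRing, hUniv, hKM, hμ1⟩ := hXp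
  -- X is nonempty
  have hXne : Nonempty X := by
    by_contra h
    rw [not_nonempty_iff] at h
    have huniv_empty : (Set.univ : Set X) = ∅ := Set.univ_eq_empty_iff.mpr h
    have h2 := hKM.additive Set.univ hUniv Set.univ hUniv (by simp [huniv_empty])
    rw [Set.union_self, hμ1] at h2
    exact one_ne_zero (left_eq_add.mp h2)
  haveI := hXne
  have hpart_eq : ∀ α : Finset (Set X), IsFinPartition R α →
      hMeasPart R μ T α = hTopCov T α :=
    fun α hα => hMeasPart_eq_hTopCov hRing hT hA1 hα
  have hbase : IsFinPartition R ({Set.univ} : Finset (Set X)) := by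
    refine ⟨?_, ?_, ?_, ?_⟩
    · intro A hA
      rw [Finset.mem_singleton] at hA
      rw [hA]; exact hUniv
    · intro A hA
      rw [Finset.mem_singleton] at hA
      rw [hA]; exact Set.univ_nonempty.ne_empty
    · intro A hA B hB hne
      rw [Finset.mem_singleton] at hA hB
      exact absurd (hA.trans hB.symm) hne
    · simp
  unfold hMeas hTop
  set Sm := {r : ℝ | ∃ α : Finset (Set X), IsFinPartition R α ∧ r = hMeasPart R μ T α} with hSm
  set St := {r : ℝ | ∃ 𝒰 : Finset (Set X), (∀ U ∈ 𝒰, (TopologicalSpace.generateFrom R).IsOpen U) ∧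
      ⋃₀ (𝒰 : Set (Set X)) = Set.univ ∧ r = hTopCov T 𝒰} with hSt
  have hd1 : ∀ a ∈ Sm, ∃ b ∈ St, a ≤ b := by
    rintro a ⟨α, hα, rfl⟩
    refine ⟨hTopCov T α, ⟨α, ?_, hα.2.2.2, rfl⟩, le_of_eq (hpart_eq α hα)⟩
    intro U hU
    exact TopologicalSpace.GenerateOpen.basic U (hα.1 U hU)
  have hd2 : ∀ b ∈ St, ∃ a ∈ Sm, b ≤ a := by
    rintro b ⟨𝒰, hop, hcov, rfl⟩
    obtain ⟨𝒱, h𝒱R, h𝒱cov, h𝒱ref⟩ := exists_R_refinement hRing hUniv hcomp hop hcov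
    obtain ⟨hαpart, hαref⟩ := coverPart_spec hRing hUniv h𝒱R h𝒱cov
    refine ⟨hMeasPart R μ T (coverPart 𝒱), ⟨_, hαpart, rfl⟩, ?_⟩
    rw [hpart_eq _ hαpart]
    exact hTopCov_le_of_refines T hcov hαpart.2.2.2 (refines_trans hαref h𝒱ref)
  have hne1 : Sm.Nonempty := ⟨_, {Set.univ}, hbase, rfl⟩
  have hne2 : St.Nonempty := by
    obtain ⟨a, ha⟩ := hne1
    obtain ⟨b, hb, -⟩ := hd1 a ha
    exact ⟨b, hb⟩
  by_cases hb : BddAbove St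
  · have hb1 : BddAbove Sm := by
      obtain ⟨M, hM⟩ := hb
      refine ⟨M, fun a ha => ?_⟩
      obtain ⟨b, hbSt, hab⟩ := hd1 a ha
      exact hab.trans (hM hbSt)
    apply le_antisymm
    · refine csSup_le hne1 fun a ha => ?_
      obtain ⟨b, hbSt, hab⟩ := hd1 a ha
      exact hab.trans (le_csSup hb hbSt)
    · refine csSup_le hne2 fun b hbSt => ?_
      obtain ⟨a, ha, hba⟩ := hd2 b hbSt
      exact hba.trans (le_csSup hb1 ha)
  · have hb1 : ¬BddAbove Sm := by
      rintro ⟨M, hM⟩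
      refine hb ⟨M, fun b hbSt => ?_⟩
      obtain ⟨a, ha, hba⟩ := hd2 b hbSt
      exact hba.trans (hM ha)
    rw [Real.sSup_of_not_bddAbove hb1, Real.sSup_of_not_bddAbove hb]
end
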